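/- arXiv:1908.11182 — 7 statements merged into one kernel-verified Lean document; each statement's English description precedes it below -/
import Mathlib

section
/- Let A be a positive operator on a complex Hilbert space H and let T be a bounded operator admitting an A-adjoint that is A-self-adjoint (i.e., AT = T*A). Then the A-numerical radius of T equals its A-operator seminorm: w_A(T) = ‖T‖_A. -/
noncomputable section
open Complex ContinuousLinearMap

variable {H : Type*} [NormedAddCommGroup H] [InnerProductSpace ℂ H] [CompleteSpace H]

/-- The `A`-inner product `⟨x,y⟩_A = ⟨Ax,y⟩`. -/
def innA (A : H →L[ℂ] H) (x y : H) : ℂ := inner ℂ (A x) y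

/-- The `A`-seminorm of a vector, `‖x‖_A = √⟨x,x⟩_A`. -/
def vnormA (A : H →L[ℂ] H) (x : H) : ℝ := Real.sqrt (innA A x x).re

/-- The `A`-numerical radius `w_A(T) = sup{|⟨Tx,x⟩_A| : ‖x‖_A = 1}`. -/
def wA (A T : H →L[ℂ] H) : ℝ :=
  sSup {r : ℝ | ∃ x : H, vnormA A x = 1 ∧ r = ‖innA A (T x) x‖}

/-- The `A`-operator seminorm, `sup` over `A`-unit vectors in the closure of the range of `A`. -/
def opNormA (A T : H →L[ℂ] H) : ℝ :=
  sSup {r : ℝ | ∃ x : H, x ∈ closure (Set.range A) ∧ vnormA A x = 1 ∧ r = vnormA A (T x)}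

/-- The `A`-operator seminorm, `sup` over all `A`-unit vectors (used when `A > 0`). -/
def opNormA' (A T : H →L[ℂ] H) : ℝ :=
  sSup {r : ℝ | ∃ x : H, vnormA A x = 1 ∧ r = vnormA A (T x)}

/-- The `A`-Crawford number `c_A(T) = inf{|⟨Tx,x⟩_A| : ‖x‖_A = 1}`. -/
def cA (A T : H →L[ℂ] H) : ℝ :=
  sInf {r : ℝ | ∃ x : H, vnormA A x = 1 ∧ r = ‖innA A (T x) x‖}

/-- The `A`-minimum modulus `m_A(T) = inf{‖Tx‖_A : ‖x‖_A = 1}` (version for `A > 0`). -/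
def mA (A T : H →L[ℂ] H) : ℝ :=
  sInf {r : ℝ | ∃ x : H, vnormA A x = 1 ∧ r = vnormA A (T x)}

/-- `S` is an `A`-adjoint of `T`, i.e. `A S = T* A`. -/
def IsAAdjoint (A T S : H →L[ℂ] H) : Prop :=
  A.comp S = (ContinuousLinearMap.adjoint T).comp A

/-- `A` is strictly positive: positive and `⟨Ax,x⟩ > 0` for all `x ≠ 0`. -/
def StrictPos (A : H →L[ℂ] H) : Prop :=
  A.IsPositive ∧ ∀ x : H, x ≠ 0 → 0 < (innA A x x).re

/-- The inner product on `H ⊕ H`. -/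
def inn2 (u v : H × H) : ℂ := inner ℂ u.1 v.1 + inner ℂ u.2 v.2

/-- `B = diag(A, A)` acting on `H ⊕ H`. -/
def Bop (A : H →L[ℂ] H) : H × H →L[ℂ] H × H := A.prodMap A

/-- The `B`-seminorm on `H ⊕ H`. -/
def vnormB (A : H →L[ℂ] H) (u : H × H) : ℝ := Real.sqrt (inn2 (Bop A u) u).re

/-- The `B`-numerical radius on `H ⊕ H`, where `B = diag(A, A)`. -/
def wB (A : H →L[ℂ] H) (S : H × H →L[ℂ] H × H) : ℝ :=
  sSup {r : ℝ | ∃ u : H × H, vnormB A u = 1 ∧ r = ‖inn2 (Bop A (S u)) u‖}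

/-- The `2 × 2` operator matrix `[[X, Y], [Z, W]]` acting on `H ⊕ H`. -/
def blk (X Y Z W : H →L[ℂ] H) : H × H →L[ℂ] H × H :=
  ((X.comp (ContinuousLinearMap.fst ℂ H H)) + (Y.comp (ContinuousLinearMap.snd ℂ H H))).prod
    ((Z.comp (ContinuousLinearMap.fst ℂ H H)) + (W.comp (ContinuousLinearMap.snd ℂ H H)))

/-! ### Auxiliary lemmas for `stmt0` -/

namespace Stmt0Aux
set_option linter.unusedSectionVars false

variable {H : Type*} [NormedAddCommGroup H] [InnerProductSpace ℂ H] [CompleteSpace H]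
variable (A : H →L[ℂ] H)

lemma innA_add_left (x y z : H) : innA A (x + y) z = innA A x z + innA A y z := by
  simp [innA, map_add, inner_add_left]

lemma innA_add_right (x y z : H) : innA A x (y + z) = innA A x y + innA A x z := by
  simp [innA, inner_add_right]

lemma innA_sub_left (x y z : H) : innA A (x - y) z = innA A x z - innA A y z := by
  simp [innA, map_sub, inner_sub_left]

lemma innA_sub_right (x y z : H) : innA A x (y - z) = innA A x y - innA A x z := by
  simp [innA, inner_sub_right]

lemma innA_smul_left (c : ℂ) (x y : H) :
    innA A (c • x) y = (starRingEnd ℂ) c * innA A x y := by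
  simp [innA, map_smul, inner_smul_left, mul_comm]

lemma innA_smul_right (c : ℂ) (x y : H) : innA A x (c • y) = c * innA A x y := by
  simp [innA, inner_smul_right]

lemma innA_conj (hA : IsSelfAdjoint A) (x y : H) :
    innA A y x = (starRingEnd ℂ) (innA A x y) := by
  have h1 : (inner ℂ (A y) x : ℂ) = inner ℂ (ContinuousLinearMap.adjoint A y) x := by
    rw [hA.adjoint_eq]
  have h2 : (inner ℂ (ContinuousLinearMap.adjoint A y) x : ℂ) = inner ℂ y (A x) :=
    ContinuousLinearMap.adjoint_inner_left A x y
  have h3 : (inner ℂ y (A x) : ℂ) = (starRingEnd ℂ) (inner ℂ (A x) y) :=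
    (inner_conj_symm _ _).symm
  exact (h1.trans h2).trans h3

lemma q_nonneg (hA : A.IsPositive) (x : H) : 0 ≤ (innA A x x).re :=
  hA.re_inner_nonneg_left x

lemma vnormA_nonneg (x : H) : 0 ≤ vnormA A x := Real.sqrt_nonneg _

lemma vnormA_sq (hA : A.IsPositive) (x : H) : vnormA A x ^ 2 = (innA A x x).re :=
  Real.sq_sqrt (q_nonneg A hA x)

/-- The `A`-semi-inner-product as a `PreInnerProductSpace.Core`. -/
def coreA (hA : A.IsPositive) : PreInnerProductSpace.Core ℂ H where
  inner := innA A
  conj_inner_symm := fun x y => (innA_conj A hA.isSelfAdjoint y x).symm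
  re_inner_nonneg := fun x => q_nonneg A hA x
  add_left := fun x y z => innA_add_left A x y z
  smul_left := fun x y r => innA_smul_left A r x y

/-- Cauchy–Schwarz for the `A`-semi-inner-product. -/
lemma cs (hA : A.IsPositive) (x y : H) :
    ‖innA A x y‖ ≤ vnormA A x * vnormA A y := by
  have h : ‖innA A x y‖ * ‖innA A y x‖ ≤ (innA A x x).re * (innA A y y).re :=
    InnerProductSpace.Core.inner_mul_inner_self_le (𝕜 := ℂ) (c := coreA A hA) x y
  have hyx : ‖innA A y x‖ = ‖innA A x y‖ := by
    rw [innA_conj A hA.isSelfAdjoint x y]  -- rewrites innA A y x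
    exact RCLike.norm_conj _
  rw [hyx] at h
  have h1 : ‖innA A x y‖ = Real.sqrt (‖innA A x y‖ * ‖innA A x y‖) := by
    rw [Real.sqrt_mul_self (norm_nonneg _)]
  rw [h1]
  calc Real.sqrt (‖innA A x y‖ * ‖innA A x y‖)
      ≤ Real.sqrt ((innA A x x).re * (innA A y y).re) := Real.sqrt_le_sqrt h
    _ = vnormA A x * vnormA A y := Real.sqrt_mul (q_nonneg A hA x) _

lemma vnormA_neg (x : H) : vnormA A (-x) = vnormA A x := by
  simp [vnormA, innA, map_neg]

lemma vnormA_add_le (hA : A.IsPositive) (x y : H) :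
    vnormA A (x + y) ≤ vnormA A x + vnormA A y := by
  have hq : (innA A (x + y) (x + y)).re
      = (innA A x x).re + 2 * (innA A x y).re + (innA A y y).re := by
    have hxy : (innA A y x).re = (innA A x y).re := by
      rw [innA_conj A hA.isSelfAdjoint x y, Complex.conj_re]
    simp only [innA_add_left, innA_add_right, Complex.add_re]
    linarith
  have h2 : (innA A x y).re ≤ vnormA A x * vnormA A y :=
    le_trans (Complex.re_le_norm _) (cs A hA x y)
  have h3 : (innA A (x + y) (x + y)).re ≤ (vnormA A x + vnormA A y) ^ 2 := by
    nlinarith [vnormA_sq A hA x, vnormA_sq A hA y]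
  calc vnormA A (x + y) = Real.sqrt (innA A (x + y) (x + y)).re := rfl
    _ ≤ Real.sqrt ((vnormA A x + vnormA A y) ^ 2) := Real.sqrt_le_sqrt h3
    _ = vnormA A x + vnormA A y :=
        Real.sqrt_sq (add_nonneg (vnormA_nonneg A x) (vnormA_nonneg A y))

lemma vnormA_add_zero (hA : A.IsPositive) {d : H} (hd : vnormA A d = 0) (a : H) :
    vnormA A (a + d) = vnormA A a := by
  have h1 : vnormA A (a + d) ≤ vnormA A a := by
    have := vnormA_add_le A hA a d; rw [hd] at this; linarith
  have h2 : vnormA A a ≤ vnormA A (a + d) := by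
    have h := vnormA_add_le A hA (a + d) (-d)
    rw [vnormA_neg A d, hd] at h
    simpa using h
  linarith

lemma vnormA_smul (hA : A.IsPositive) (c : ℂ) (x : H) :
    vnormA A (c • x) = ‖c‖ * vnormA A x := by
  have h1 : innA A (c • x) (c • x) = ((Complex.normSq c : ℝ) : ℂ) * innA A x x := by
    rw [innA_smul_left, innA_smul_right, ← mul_assoc]
    congr 1
    rw [mul_comm ((starRingEnd ℂ) c) c, Complex.mul_conj]
  have h2 : (innA A (c • x) (c • x)).re = Complex.normSq c * (innA A x x).re := by
    rw [h1, Complex.re_ofReal_mul]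
  unfold vnormA
  rw [h2, Real.sqrt_mul (Complex.normSq_nonneg c), ← Complex.norm_def]

lemma innA_self_real (hA : A.IsPositive) (x : H) :
    innA A x x = ((innA A x x).re : ℂ) := by
  have h := (innA_conj A hA.isSelfAdjoint x x).symm
  exact (Complex.conj_eq_iff_re.mp h).symm

lemma innA_par (x y : H) :
    (innA A (x + y) (x + y)).re + (innA A (x - y) (x - y)).re
      = 2 * (innA A x x).re + 2 * (innA A y y).re := by
  simp only [innA_add_left, innA_add_right, innA_sub_left, innA_sub_right,
    Complex.add_re, Complex.sub_re]
  ring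

lemma vnormA_le_norm (hA : A.IsPositive) (z : H) :
    vnormA A z ≤ Real.sqrt ‖A‖ * ‖z‖ := by
  have h2 : ‖innA A z z‖ ≤ ‖A z‖ * ‖z‖ := by
    exact norm_inner_le_norm _ _
  have h3 : ‖A z‖ ≤ ‖A‖ * ‖z‖ := A.le_opNorm z
  have h1 : (innA A z z).re ≤ ‖A‖ * ‖z‖ ^ 2 := by
    have := Complex.re_le_norm (innA A z z)
    nlinarith [norm_nonneg z]
  calc vnormA A z = Real.sqrt (innA A z z).re := rfl
    _ ≤ Real.sqrt (‖A‖ * ‖z‖ ^ 2) := Real.sqrt_le_sqrt h1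
    _ = Real.sqrt ‖A‖ * ‖z‖ := by
        rw [Real.sqrt_mul (norm_nonneg A), Real.sqrt_sq (norm_nonneg z)]

lemma innA_sq_le (hA : A.IsPositive) (S : H →L[ℂ] H)
    (hs : ∀ x y : H, innA A (S x) y = innA A x (S y)) (x : H) :
    vnormA A (S x) ^ 2 ≤ vnormA A x * vnormA A (S (S x)) := by
  have h1 : vnormA A (S x) ^ 2 = (innA A (S x) (S x)).re := vnormA_sq A hA _
  rw [h1, hs x (S x)]
  exact le_trans (Complex.re_le_norm _) (cs A hA x (S (S x)))

lemma key (hA : A.IsPositive) : ∀ n : ℕ, ∀ S : H →L[ℂ] H,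
    (∀ x y : H, innA A (S x) y = innA A x (S y)) → ∀ x : H,
    vnormA A (S x) ^ (2 ^ n) ≤ vnormA A x ^ (2 ^ n - 1) * vnormA A ((S ^ (2 ^ n)) x) := by
  intro n
  induction n with
  | zero =>
    intro S hs x
    simp [pow_one]
  | succ n ih =>
    intro S hs x
    have hs2 : ∀ a b : H, innA A ((S * S) a) b = innA A a ((S * S) b) := by
      intro a b
      simp only [ContinuousLinearMap.mul_apply]
      rw [hs, hs]
    have hmul : ∀ z : H, (S * S) z = S (S z) := fun z => rfl
    have h2n : (1 : ℕ) ≤ 2 ^ n := Nat.one_le_two_pow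
    have hstep : vnormA A (S x) ^ 2 ≤ vnormA A x * vnormA A ((S * S) x) := by
      rw [hmul]; exact innA_sq_le A hA S hs x
    have hpow : vnormA A (S x) ^ (2 ^ (n + 1)) = (vnormA A (S x) ^ 2) ^ (2 ^ n) := by
      rw [← pow_mul]
      congr 1
      rw [pow_succ]
      ring
    have h1 : (vnormA A (S x) ^ 2) ^ (2 ^ n)
        ≤ (vnormA A x * vnormA A ((S * S) x)) ^ (2 ^ n) :=
      pow_le_pow_left₀ (sq_nonneg _) hstep _
    have hih := ih (S * S) hs2 x
    have hSS : ((S * S) ^ (2 ^ n)) x = (S ^ (2 ^ (n + 1))) x := by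
      congr 1
      rw [← sq, ← pow_mul, pow_succ]
      ring_nf
    rw [hSS] at hih
    calc vnormA A (S x) ^ (2 ^ (n + 1))
        = (vnormA A (S x) ^ 2) ^ (2 ^ n) := hpow
      _ ≤ (vnormA A x * vnormA A ((S * S) x)) ^ (2 ^ n) := h1
      _ = vnormA A x ^ (2 ^ n) * vnormA A ((S * S) x) ^ (2 ^ n) := mul_pow _ _ _
      _ ≤ vnormA A x ^ (2 ^ n) *
            (vnormA A x ^ (2 ^ n - 1) * vnormA A ((S ^ (2 ^ (n + 1))) x)) := by
          exact mul_le_mul_of_nonneg_left hih (pow_nonneg (vnormA_nonneg A x) _)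
      _ = vnormA A x ^ (2 ^ (n + 1) - 1) * vnormA A ((S ^ (2 ^ (n + 1))) x) := by
          rw [← mul_assoc, ← pow_add]
          congr 2
          have : 2 ^ (n + 1) = 2 ^ n + 2 ^ n := by rw [pow_succ]; ring
          omega

lemma pT_le (hA : A.IsPositive) (T : H →L[ℂ] H)
    (hs : ∀ x y : H, innA A (T x) y = innA A x (T y)) (x : H) :
    vnormA A (T x) ≤ ‖T‖ * vnormA A x := by
  by_cases hx : vnormA A x = 0
  · have h2 := innA_sq_le A hA T hs x
    rw [hx, zero_mul] at h2
    have h3 : vnormA A (T x) = 0 := by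
      nlinarith [vnormA_nonneg A (T x)]
    rw [h3, hx, mul_zero]
  · have hx' : 0 < vnormA A x := lt_of_le_of_ne (vnormA_nonneg A x) (Ne.symm hx)
    by_contra hlt
    push_neg at hlt
    set a := vnormA A (T x) with ha_def
    set b := ‖T‖ * vnormA A x with hb_def
    have hb : 0 ≤ b := mul_nonneg (norm_nonneg _) (vnormA_nonneg A x)
    have ha : 0 < a := lt_of_le_of_lt hb hlt
    set C := Real.sqrt ‖A‖ * ‖x‖ / vnormA A x with hC_def
    have hC : 0 ≤ C := by positivity
    have hbound : ∀ n : ℕ, a ^ (2 ^ n) ≤ b ^ (2 ^ n) * C := by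
      intro n
      have h2n : (1 : ℕ) ≤ 2 ^ n := Nat.one_le_two_pow
      have h1 := key A hA n T hs x
      have h2 : vnormA A ((T ^ (2 ^ n)) x) ≤ Real.sqrt ‖A‖ * (‖T‖ ^ (2 ^ n) * ‖x‖) := by
        calc vnormA A ((T ^ (2 ^ n)) x) ≤ Real.sqrt ‖A‖ * ‖(T ^ (2 ^ n)) x‖ :=
              vnormA_le_norm A hA _
          _ ≤ Real.sqrt ‖A‖ * (‖T ^ (2 ^ n)‖ * ‖x‖) := by
              apply mul_le_mul_of_nonneg_left ((T ^ (2 ^ n)).le_opNorm x) (Real.sqrt_nonneg _)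
          _ ≤ Real.sqrt ‖A‖ * (‖T‖ ^ (2 ^ n) * ‖x‖) := by
              have h := norm_pow_le' T (show 0 < 2 ^ n by positivity)
              exact mul_le_mul_of_nonneg_left
                (mul_le_mul_of_nonneg_right h (norm_nonneg x)) (Real.sqrt_nonneg _)
      have h3 : a ^ (2 ^ n) ≤ vnormA A x ^ (2 ^ n - 1) * (Real.sqrt ‖A‖ * (‖T‖ ^ (2 ^ n) * ‖x‖)) := by
        refine le_trans h1 ?_
        exact mul_le_mul_of_nonneg_left h2 (pow_nonneg (vnormA_nonneg A x) _)
      have h4 : vnormA A x ^ (2 ^ n - 1) * (Real.sqrt ‖A‖ * (‖T‖ ^ (2 ^ n) * ‖x‖))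
          = b ^ (2 ^ n) * C := by
        rw [hb_def, hC_def, mul_pow]
        have hsplit : vnormA A x ^ (2 ^ n) = vnormA A x ^ (2 ^ n - 1) * vnormA A x := by
          rw [← pow_succ]
          congr 1
          omega
        rw [hsplit]
        field_simp
      rw [← h4]; exact h3
    rcases eq_or_lt_of_le hb with hb0 | hbpos
    · have := hbound 0
      simp only [pow_one, pow_zero] at this
      rw [← hb0] at this
      simp at this
      linarith
    · have hr : 1 < a / b := (one_lt_div hbpos).mpr hlt
      obtain ⟨n, hn⟩ := pow_unbounded_of_one_lt C hr
      have h2 : (a / b) ^ n ≤ (a / b) ^ (2 ^ n) :=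
        pow_le_pow_right₀ hr.le (Nat.le_of_lt (Nat.lt_two_pow_self (n := n)))
      have h3 := hbound n
      have h5 : (a / b) ^ (2 ^ n) ≤ C := by
        rw [div_pow, div_le_iff₀ (pow_pos hbpos _)]
        calc a ^ (2 ^ n) ≤ b ^ (2 ^ n) * C := h3
          _ = C * b ^ (2 ^ n) := by ring
      linarith [lt_of_lt_of_le hn (le_trans h2 h5)]

end Stmt0Aux


open Stmt0Aux in
theorem stmt0 (A T : H →L[ℂ] H) (hA : A.IsPositive)
    (hT : ∃ S, IsAAdjoint A T S) (hsa : IsSelfAdjoint (A.comp T)) :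
    wA A T = opNormA A T := by
  clear hT
  -- `T` is symmetric for the `A`-semi-inner-product
  have hsym : ∀ x y : H, innA A (T x) y = innA A x (T y) := by
    intro x y
    have hadj : ContinuousLinearMap.adjoint (A.comp T) = A.comp T := hsa.adjoint_eq
    have h1 : (inner ℂ (A (T x)) y : ℂ) = inner ℂ x (A (T y)) := by
      calc (inner ℂ (A (T x)) y : ℂ) = inner ℂ ((A.comp T) x) y := rfl
        _ = inner ℂ (ContinuousLinearMap.adjoint (A.comp T) x) y := by rw [hadj]
        _ = inner ℂ x ((A.comp T) y) := ContinuousLinearMap.adjoint_inner_left _ _ _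
    have h2 : (inner ℂ x (A (T y)) : ℂ) = inner ℂ (A x) (T y) := by
      conv_lhs => rw [← hA.isSelfAdjoint.adjoint_eq]
      exact ContinuousLinearMap.adjoint_inner_right _ _ _
    exact h1.trans h2
  have hbT : ∀ x : H, vnormA A (T x) ≤ ‖T‖ * vnormA A x := pT_le A hA T hsym
  set SW := {r : ℝ | ∃ x : H, vnormA A x = 1 ∧ r = ‖innA A (T x) x‖} with hSW
  set SO := {r : ℝ | ∃ x : H, x ∈ closure (Set.range ⇑A) ∧ vnormA A x = 1 ∧
      r = vnormA A (T x)} with hSO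
  have hW : wA A T = sSup SW := rfl
  have hO : opNormA A T = sSup SO := rfl
  have hbw : ∀ r ∈ SW, r ≤ ‖T‖ := by
    rintro r ⟨x, hx, rfl⟩
    calc ‖innA A (T x) x‖ ≤ vnormA A (T x) * vnormA A x := cs A hA _ _
      _ = vnormA A (T x) := by rw [hx, mul_one]
      _ ≤ ‖T‖ * vnormA A x := hbT x
      _ = ‖T‖ := by rw [hx, mul_one]
  have hbo : ∀ r ∈ SO, r ≤ ‖T‖ := by
    rintro r ⟨x, -, hx, rfl⟩
    calc vnormA A (T x) ≤ ‖T‖ * vnormA A x := hbT x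
      _ = ‖T‖ := by rw [hx, mul_one]
  have hbddw : BddAbove SW := ⟨‖T‖, hbw⟩
  have hbddo : BddAbove SO := ⟨‖T‖, hbo⟩
  -- projection onto the closure of the range of `A`
  have proj : ∀ x : H, vnormA A x = 1 → ∃ x₁ : H, x₁ ∈ closure (Set.range ⇑A) ∧
      vnormA A x₁ = 1 ∧ vnormA A (T x₁) = vnormA A (T x) := by
    intro x hx
    set K : Submodule ℂ H := (LinearMap.range (A.toLinearMap)).topologicalClosure with hK
    haveI : CompleteSpace K := (Submodule.isClosed_topologicalClosure _).completeSpace_coe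
    set x₁ : H := (K.orthogonalProjectionOnto x : H) with hx₁
    have hd : x - x₁ ∈ Kᗮ := K.sub_starProjection_mem_orthogonal x
    have hAd : A (x - x₁) ∈ K := by
      apply Submodule.le_topologicalClosure
      exact LinearMap.mem_range_self _ _
    have hq0 : innA A (x - x₁) (x - x₁) = 0 :=
      (Submodule.mem_orthogonal K (x - x₁)).mp hd _ hAd
    have hd0 : vnormA A (x - x₁) = 0 := by
      unfold vnormA; rw [hq0]; simp
    have hT0 : vnormA A (T (x - x₁)) = 0 := by
      have h := hbT (x - x₁)
      rw [hd0, mul_zero] at h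
      exact le_antisymm h (vnormA_nonneg A _)
    have h1 : vnormA A x₁ = 1 := by
      have h := vnormA_add_zero A hA hd0 x₁
      have heq : x₁ + (x - x₁) = x := by abel
      rw [heq] at h
      rw [← h]; exact hx
    have h2 : vnormA A (T x₁) = vnormA A (T x) := by
      have h := vnormA_add_zero A hA hT0 (T x₁)
      have heq : T x₁ + T (x - x₁) = T x := by
        rw [← map_add]; congr 1; abel
      rw [heq] at h
      exact h.symm
    have hm : x₁ ∈ K := (K.orthogonalProjectionOnto x).2
    have hmem : x₁ ∈ closure (Set.range ⇑A) := by
      have hm2 : x₁ ∈ ((LinearMap.range A.toLinearMap).topologicalClosure : Set H) := hm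
      rw [Submodule.topologicalClosure_coe] at hm2
      simpa [LinearMap.coe_range] using hm2
    exact ⟨x₁, hmem, h1, h2⟩
  by_cases hex : ∃ x : H, vnormA A x = 1
  · obtain ⟨xu, hxu⟩ := hex
    obtain ⟨y₁, hy₁c, hy₁n, -⟩ := proj xu hxu
    have hw0 : 0 ≤ sSup SW := by
      have h1 : ‖innA A (T xu) xu‖ ≤ sSup SW := le_csSup hbddw ⟨xu, hxu, rfl⟩
      exact le_trans (norm_nonneg _) h1
    have ho0 : 0 ≤ sSup SO := by
      have h1 : vnormA A (T y₁) ≤ sSup SO := le_csSup hbddo ⟨y₁, hy₁c, hy₁n, rfl⟩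
      exact le_trans (vnormA_nonneg A _) h1
    rw [hW, hO]
    apply le_antisymm
    · -- wA ≤ opNormA
      apply Real.sSup_le _ ho0
      rintro r ⟨x, hx, rfl⟩
      obtain ⟨x₁, hc, hn, hTeq⟩ := proj x hx
      have h1 : ‖innA A (T x) x‖ ≤ vnormA A (T x) := by
        have h := cs A hA (T x) x; rw [hx, mul_one] at h; exact h
      have h3 : vnormA A (T x₁) ≤ sSup SO := le_csSup hbddo ⟨x₁, hc, hn, rfl⟩
      rw [hTeq] at h3
      linarith
    · -- opNormA ≤ wA
      apply Real.sSup_le _ hw0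
      rintro r ⟨x, -, hx, rfl⟩
      set w := sSup SW with hwdef
      -- the quadratic-form bound
      have Qb : ∀ z : H, ‖innA A (T z) z‖ ≤ w * vnormA A z ^ 2 := by
        intro z
        by_cases hz : vnormA A z = 0
        · have h1 := cs A hA (T z) z
          rw [hz, mul_zero] at h1
          have h2 : ‖innA A (T z) z‖ = 0 :=
            le_antisymm h1 (norm_nonneg _)
          rw [h2, hz]
          simp
        · have hzpos : 0 < vnormA A z := lt_of_le_of_ne (vnormA_nonneg A z) (Ne.symm hz)
          set v := vnormA A z with hvdef
          set z' : H := ((v : ℂ))⁻¹ • z with hz'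
          have hz1 : vnormA A z' = 1 := by
            rw [hz', vnormA_smul A hA, norm_inv, Complex.norm_real, Real.norm_eq_abs, abs_of_pos hzpos,
              ← hvdef]
            field_simp
          have hle : ‖innA A (T z') z'‖ ≤ w := le_csSup hbddw ⟨z', hz1, rfl⟩
          have habs : ‖innA A (T z') z'‖
              = v⁻¹ * (v⁻¹ * ‖innA A (T z) z‖) := by
            rw [hz', map_smul, innA_smul_left, innA_smul_right, norm_mul, norm_mul,
              Complex.norm_conj, norm_inv, Complex.norm_real, Real.norm_eq_abs, abs_of_pos hzpos]
          rw [habs] at hle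
          have hXid : ‖innA A (T z) z‖
              = v ^ 2 * (v⁻¹ * (v⁻¹ * ‖innA A (T z) z‖)) := by
            field_simp
          calc ‖innA A (T z) z‖
              = v ^ 2 * (v⁻¹ * (v⁻¹ * ‖innA A (T z) z‖)) := hXid
            _ ≤ v ^ 2 * w := mul_le_mul_of_nonneg_left hle (sq_nonneg v)
            _ = w * v ^ 2 := by ring
      -- polarization
      by_cases hTx : vnormA A (T x) = 0
      · rw [hTx]; exact hw0
      · have hmpos : 0 < vnormA A (T x) :=
          lt_of_le_of_ne (vnormA_nonneg A _) (Ne.symm hTx)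
        set m := vnormA A (T x) with hmdef
        set y : H := ((m : ℂ))⁻¹ • T x with hy
        have hy1 : vnormA A y = 1 := by
          rw [hy, vnormA_smul A hA, norm_inv, Complex.norm_real, Real.norm_eq_abs, abs_of_pos hmpos, ← hmdef]
          field_simp
        have hq : (innA A (T x) (T x)).re = m ^ 2 := (vnormA_sq A hA (T x)).symm
        have hself : innA A (T x) (T x) = ((m ^ 2 : ℝ) : ℂ) := by
          rw [innA_self_real A hA (T x), hq]
        have hre : (innA A (T x) y).re = m := by
          rw [hy, innA_smul_right, hself, ← Complex.ofReal_inv, ← Complex.ofReal_mul,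
            Complex.ofReal_re, pow_two]
          field_simp
        have hxy : innA A (T (x + y)) (x + y) - innA A (T (x - y)) (x - y)
            = 2 * innA A (T x) y + 2 * innA A (T y) x := by
          rw [map_add, map_sub]
          simp only [innA_add_left, innA_add_right, innA_sub_left, innA_sub_right]
          ring
        have hconj : innA A (T y) x = (starRingEnd ℂ) (innA A (T x) y) := by
          rw [hsym y x]
          exact innA_conj A hA.isSelfAdjoint (T x) y
        have h2a : 2 * innA A (T x) y + 2 * (starRingEnd ℂ) (innA A (T x) y)
            = ((4 * m : ℝ) : ℂ) := by
          calc 2 * innA A (T x) y + 2 * (starRingEnd ℂ) (innA A (T x) y)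
              = 2 * (innA A (T x) y + (starRingEnd ℂ) (innA A (T x) y)) := by ring
            _ = 2 * ((2 * (innA A (T x) y).re : ℝ) : ℂ) := by rw [Complex.add_conj]
            _ = ((4 * m : ℝ) : ℂ) := by rw [hre]; push_cast; ring
        rw [hconj] at hxy
        have hre4 : (innA A (T (x + y)) (x + y)).re - (innA A (T (x - y)) (x - y)).re
            = 4 * m := by
          have h := congrArg Complex.re (hxy.trans h2a)
          simpa [Complex.sub_re] using h
        have b1 := Qb (x + y)
        have b2 := Qb (x - y)
        have hp : vnormA A (x + y) ^ 2 + vnormA A (x - y) ^ 2 = 4 := by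
          rw [vnormA_sq A hA, vnormA_sq A hA, innA_par,
            ← vnormA_sq A hA x, ← vnormA_sq A hA y, hx, hy1]
          norm_num
        have e1 : (innA A (T (x + y)) (x + y)).re
            ≤ ‖innA A (T (x + y)) (x + y)‖ := Complex.re_le_norm _
        have e2 : -(innA A (T (x - y)) (x - y)).re
            ≤ ‖innA A (T (x - y)) (x - y)‖ := by
          have h := Complex.abs_re_le_norm (innA A (T (x - y)) (x - y))
          have := (abs_le.mp h).1
          linarith
        have hsum : w * vnormA A (x + y) ^ 2 + w * vnormA A (x - y) ^ 2 = 4 * w := by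
          rw [← mul_add, hp]; ring
        linarith
  · -- no `A`-unit vectors: both sides are `sSup ∅ = 0`
    have h1 : SW = ∅ := by
      rw [Set.eq_empty_iff_forall_notMem]
      rintro r ⟨x, hx, -⟩
      exact hex ⟨x, hx⟩
    have h2 : SO = ∅ := by
      rw [Set.eq_empty_iff_forall_notMem]
      rintro r ⟨x, -, hx, -⟩
      exact hex ⟨x, hx⟩
    rw [hW, hO, h1, h2]
end
end

section
/- Let A be a positive operator on a complex Hilbert space H and T ∈ B_A(H). For every real θ, w_A(Re_A(e^{iθ}T)) = ‖Re_A(e^{iθ}T)‖_A, where Re_A(S) = (S + S^{♯A})/2. -/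
noncomputable section
open Complex ContinuousLinearMap

variable {H : Type*} [NormedAddCommGroup H] [InnerProductSpace ℂ H] [CompleteSpace H]

local notation "⟪" x ", " y "⟫" => @inner ℂ _ _ x y

section key

variable {A P R : H →L[ℂ] H}

lemma auxPowRel (hR : A * R = adjoint R * A) :
    ∀ j : ℕ, A * R ^ j = (adjoint R) ^ j * A := by
  intro j
  induction j with
  | zero => simp
  | succ n ih => rw [pow_succ, ← mul_assoc, ih, mul_assoc, hR, ← mul_assoc, ← pow_succ]

lemma auxSqNormP (hP : IsSelfAdjoint P) (hP2 : P * P = A) (z : H) :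
    ‖P z‖ ^ 2 = (⟪A z, z⟫).re := by
  have hA : A z = P (P z) := by rw [← hP2]; rfl
  have hadj : adjoint P = P := isSelfAdjoint_iff'.mp hP
  rw [hA, ← hadj, adjoint_inner_left]
  rw [hadj]
  have := @inner_self_eq_norm_sq ℂ _ _ _ _ (P z)
  simpa using this.symm

/-- Key bound: if `AR = R*A` then `‖P R x‖ ≤ ‖R‖ ‖P x‖` where `P² = A`. -/
lemma auxKeyBound (hP : IsSelfAdjoint P) (hP2 : P * P = A)
    (hR : A * R = adjoint R * A) (x : H) :
    ‖P (R x)‖ ≤ ‖R‖ * ‖P x‖ := by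
  set a : ℕ → ℝ := fun j => ‖P ((R ^ j) x)‖ with ha_def
  have ha : ∀ j, 0 ≤ a j := fun j => norm_nonneg _
  have hAz : ∀ z, A z = P (P z) := fun z => by
    simpa [mul_apply] using (DFunLike.congr_fun hP2 z).symm
  -- step inequality
  have step : ∀ j, a j ^ 2 ≤ a 0 * a (2 * j) := by
    intro j
    have h1 : a j ^ 2 = (⟪A ((R ^ j) x), (R ^ j) x⟫).re := auxSqNormP hP hP2 _
    have h2 : A ((R ^ j) x) = ((adjoint R) ^ j) (A x) := by
      have := DFunLike.congr_fun (auxPowRel hR j) x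
      simpa [mul_apply] using this
    have h3 : (adjoint R) ^ j = adjoint (R ^ j) := by
      rw [← star_eq_adjoint, ← star_eq_adjoint, ← star_pow]
    have h4 : ⟪A ((R ^ j) x), (R ^ j) x⟫ = ⟪P x, P ((R ^ (2 * j)) x)⟫ := by
      rw [h2, h3, adjoint_inner_left, hAz]
      have h5 : (R ^ j) ((R ^ j) x) = (R ^ (2 * j)) x := by
        rw [two_mul, pow_add, ContinuousLinearMap.mul_apply]
      rw [h5]
      have hadj : adjoint P = P := isSelfAdjoint_iff'.mp hP
      rw [← hadj, adjoint_inner_left, hadj]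
    calc a j ^ 2 = (⟪P x, P ((R ^ (2 * j)) x)⟫).re := by rw [h1, h4]
      _ ≤ ‖⟪P x, P ((R ^ (2 * j)) x)⟫‖ := Complex.re_le_norm _
      _ ≤ ‖P x‖ * ‖P ((R ^ (2 * j)) x)‖ := by
          exact norm_inner_le_norm _ _
      _ = a 0 * a (2 * j) := by simp [ha_def]
  have main : ∀ n : ℕ, a 1 ^ (2 ^ n) ≤ a 0 ^ (2 ^ n - 1) * a (2 ^ n) := by
    intro n
    induction n with
    | zero => simp
    | succ n ih =>
      have h1 : (1 : ℕ) ≤ 2 ^ n := Nat.one_le_two_pow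
      calc a 1 ^ 2 ^ (n + 1) = (a 1 ^ 2 ^ n) ^ 2 := by rw [← pow_mul, pow_succ]
        _ ≤ (a 0 ^ (2 ^ n - 1) * a (2 ^ n)) ^ 2 :=
            pow_le_pow_left₀ (pow_nonneg (ha 1) _) ih 2
        _ = a 0 ^ ((2 ^ n - 1) * 2) * a (2 ^ n) ^ 2 := by rw [mul_pow, ← pow_mul]
        _ ≤ a 0 ^ ((2 ^ n - 1) * 2) * (a 0 * a (2 * 2 ^ n)) :=
            mul_le_mul_of_nonneg_left (step _) (pow_nonneg (ha 0) _)
        _ = a 0 ^ (2 ^ (n + 1) - 1) * a (2 ^ (n + 1)) := by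
            rw [← mul_assoc, ← pow_succ]
            congr 2
            · rw [pow_succ]; omega
            · rw [pow_succ]; ring
  have grow : ∀ n : ℕ, a (2 ^ n) ≤ ‖P‖ * (‖R‖ ^ (2 ^ n) * ‖x‖) := by
    intro n
    calc a (2 ^ n) ≤ ‖P‖ * ‖(R ^ (2 ^ n)) x‖ := le_opNorm _ _
      _ ≤ ‖P‖ * (‖R ^ (2 ^ n)‖ * ‖x‖) :=
          mul_le_mul_of_nonneg_left (le_opNorm _ _) (norm_nonneg _)
      _ ≤ ‖P‖ * (‖R‖ ^ (2 ^ n) * ‖x‖) := by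
          gcongr
          exact norm_pow_le' R (Nat.two_pow_pos n)
  by_cases h0 : ‖P x‖ = 0
  · -- P x = 0 ⇒ A x = 0 ⇒ A (R x) = 0 ⇒ ‖P (R x)‖ = 0
    have hPx : P x = 0 := norm_eq_zero.mp h0
    have hAx : A x = 0 := by rw [hAz, hPx, map_zero]
    have hARx : A (R x) = 0 := by
      have := DFunLike.congr_fun hR x
      simp only [ContinuousLinearMap.mul_apply] at this
      rw [this, hAx, map_zero]
    have : ‖P (R x)‖ ^ 2 = 0 := by rw [auxSqNormP hP hP2, hARx]; simp
    have h5 : ‖P (R x)‖ = 0 := by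
      have := sq_eq_zero_iff.mp this; exact this
    rw [h5, h0, mul_zero]
  by_cases hR0 : ‖R‖ = 0
  · have hRz : R = 0 := norm_eq_zero.mp hR0
    simp [hRz]
  have ht : 0 < ‖P x‖ := lt_of_le_of_ne (norm_nonneg _) (Ne.symm h0)
  have hRpos : 0 < ‖R‖ := lt_of_le_of_ne (norm_nonneg _) (Ne.symm hR0)
  have hx : x ≠ 0 := by rintro rfl; simp at h0
  have hxn : 0 < ‖x‖ := norm_pos_iff.mpr hx
  have hPn : 0 < ‖P‖ := by
    rcases eq_or_lt_of_le (norm_nonneg P) with h | h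
    · exfalso; apply h0
      have hP0 : P = 0 := norm_eq_zero.mp h.symm
      simp [hP0]
    · exact h
  set t := ‖P x‖ with htdef
  set c := ‖P‖ * ‖x‖ with hcdef
  have hc : 0 < c := mul_pos hPn hxn
  have ha0 : a 0 = t := by simp [ha_def, htdef]
  have bnd : ∀ n : ℕ, a 1 ≤ ‖R‖ * (t ^ (1 - ((1:ℝ)/2) ^ n) * c ^ (((1:ℝ)/2) ^ n)) := by
    intro n
    set ε : ℝ := ((1:ℝ)/2) ^ n with hεdef
    have hε : 0 < ε := pow_pos (by norm_num) n
    have hNε : ((2 ^ n : ℕ) : ℝ) * ε = 1 := by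
      push_cast
      rw [hεdef, ← mul_pow]
      norm_num
    have h1 : a 1 ^ (2 ^ n : ℕ) ≤ t ^ (2 ^ n - 1 : ℕ) * (‖R‖ ^ (2 ^ n : ℕ) * c) := by
      refine (main n).trans ?_
      rw [ha0]
      calc t ^ (2 ^ n - 1 : ℕ) * a (2 ^ n)
          ≤ t ^ (2 ^ n - 1 : ℕ) * (‖P‖ * (‖R‖ ^ (2 ^ n) * ‖x‖)) :=
            mul_le_mul_of_nonneg_left (grow n) (pow_nonneg ht.le _)
        _ = t ^ (2 ^ n - 1 : ℕ) * (‖R‖ ^ (2 ^ n : ℕ) * c) := by rw [hcdef]; ring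
    -- raise to power ε
    have h2 : a 1 = (a 1 ^ (2 ^ n : ℕ)) ^ ε := by
      rw [← Real.rpow_natCast (a 1) (2 ^ n), ← Real.rpow_mul (ha 1), hNε, Real.rpow_one]
    have h3 : (a 1 ^ (2 ^ n : ℕ)) ^ ε ≤ (t ^ (2 ^ n - 1 : ℕ) * (‖R‖ ^ (2 ^ n : ℕ) * c)) ^ ε :=
      Real.rpow_le_rpow (pow_nonneg (ha 1) _) h1 hε.le
    have h4 : (t ^ (2 ^ n - 1 : ℕ) * (‖R‖ ^ (2 ^ n : ℕ) * c)) ^ ε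
        = ‖R‖ * (t ^ (1 - ε) * c ^ ε) := by
      rw [Real.mul_rpow (pow_nonneg ht.le _) (by positivity),
        Real.mul_rpow (pow_nonneg hRpos.le _) hc.le,
        ← Real.rpow_natCast t (2 ^ n - 1), ← Real.rpow_natCast ‖R‖ (2 ^ n),
        ← Real.rpow_mul ht.le, ← Real.rpow_mul hRpos.le, hNε, Real.rpow_one]
      have : ((2 ^ n - 1 : ℕ) : ℝ) * ε = 1 - ε := by
        rw [Nat.cast_sub Nat.one_le_two_pow, Nat.cast_one, sub_mul, hNε, one_mul]
      rw [this]; ring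
    calc a 1 = (a 1 ^ (2 ^ n : ℕ)) ^ ε := h2
      _ ≤ _ := h3
      _ = _ := h4
  -- take the limit
  have hεt : Filter.Tendsto (fun n : ℕ => ((1:ℝ)/2) ^ n) Filter.atTop (nhds 0) :=
    tendsto_pow_atTop_nhds_zero_of_lt_one (by norm_num) (by norm_num)
  have hlim : Filter.Tendsto
      (fun n : ℕ => ‖R‖ * (t ^ (1 - ((1:ℝ)/2) ^ n) * c ^ (((1:ℝ)/2) ^ n)))
      Filter.atTop (nhds (‖R‖ * t)) := by
    have h1 : Filter.Tendsto (fun n : ℕ => t ^ (1 - ((1:ℝ)/2) ^ n))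
        Filter.atTop (nhds (t ^ (1:ℝ))) :=
      Filter.Tendsto.rpow tendsto_const_nhds (by simpa using tendsto_const_nhds.sub hεt)
        (Or.inl ht.ne')
    have h2 : Filter.Tendsto (fun n : ℕ => c ^ (((1:ℝ)/2) ^ n))
        Filter.atTop (nhds (c ^ (0:ℝ))) :=
      Filter.Tendsto.rpow tendsto_const_nhds hεt (Or.inl hc.ne')
    have := (h1.mul h2).const_mul ‖R‖
    simpa using this
  have : a 1 ≤ ‖R‖ * t := ge_of_tendsto' hlim bnd
  simpa [ha_def] using this

end key

theorem auxWAeq (A R : H →L[ℂ] H) (hA : A.IsPositive)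
    (hR : A * R = adjoint R * A) : wA A R = opNormA A R := by
  obtain ⟨P, hP, hP2⟩ : ∃ P : H →L[ℂ] H, IsSelfAdjoint P ∧ P * P = A :=
    ⟨CFC.sqrt A, IsSelfAdjoint.of_nonneg (CFC.sqrt_nonneg A),
      CFC.sqrt_mul_sqrt_self A (A.nonneg_iff_isPositive.mpr hA)⟩
  have hAz : ∀ z, A z = P (P z) := fun z => by
    simpa [mul_apply] using (DFunLike.congr_fun hP2 z).symm
  have hadjP : adjoint P = P := isSelfAdjoint_iff'.mp hP
  have hadjA : adjoint A = A := isSelfAdjoint_iff'.mp hA.isSelfAdjoint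
  have hPmove : ∀ u v : H, ⟪P u, v⟫ = ⟪u, P v⟫ := fun u v => by
    rw [← adjoint_inner_left, hadjP]
  have hAmove : ∀ u v : H, ⟪A u, v⟫ = ⟪u, A v⟫ := fun u v => by
    rw [← adjoint_inner_left, hadjA]
  have hvn : ∀ z, vnormA A z = ‖P z‖ := by
    intro z
    have h1 : (innA A z z).re = ‖P z‖ ^ 2 := (auxSqNormP hP hP2 z).symm
    rw [vnormA, h1, Real.sqrt_sq (norm_nonneg _)]
  have hinn : ∀ z y, innA A z y = ⟪P z, P y⟫ := by
    intro z y
    rw [innA, hAz, hPmove]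
  have hARz : ∀ z, A (R z) = adjoint R (A z) := fun z => by
    simpa [mul_apply] using DFunLike.congr_fun hR z
  have hkey : ∀ z, ‖P (R z)‖ ≤ ‖R‖ * ‖P z‖ := auxKeyBound hP hP2 hR
  have hker : ∀ z : H, ‖P z‖ = 0 → P (R z) = 0 := by
    intro z hz
    have := hkey z
    rw [hz, mul_zero] at this
    exact norm_eq_zero.mp (le_antisymm this (norm_nonneg _))
  have hsym : ∀ u v : H, ⟪A (R u), v⟫ = ⟪u, A (R v)⟫ := by
    intro u v
    rw [hARz, adjoint_inner_left, hAmove]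
  -- the two sets
  set W : Set ℝ := {r : ℝ | ∃ x : H, vnormA A x = 1 ∧ r = ‖innA A (R x) x‖}
    with hW
  set N : Set ℝ := {r : ℝ | ∃ x : H, x ∈ closure (Set.range A) ∧ vnormA A x = 1
    ∧ r = vnormA A (R x)} with hN
  have hWbdd : BddAbove W := by
    refine ⟨‖R‖, ?_⟩
    rintro r ⟨x, hx1, rfl⟩
    rw [hinn]
    calc ‖⟪P (R x), P x⟫‖ = ‖(⟪P (R x), P x⟫ : ℂ)‖ := rfl
      _ ≤ ‖P (R x)‖ * ‖P x‖ := norm_inner_le_norm _ _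
      _ ≤ (‖R‖ * ‖P x‖) * ‖P x‖ := by gcongr; exact hkey x
      _ = ‖R‖ := by rw [hvn] at hx1; rw [hx1]; ring
  have hNbdd : BddAbove N := by
    refine ⟨‖R‖, ?_⟩
    rintro r ⟨x, _, hx1, rfl⟩
    rw [hvn] at hx1 ⊢
    calc ‖P (R x)‖ ≤ ‖R‖ * ‖P x‖ := hkey x
      _ = ‖R‖ := by rw [hx1, mul_one]
  -- closure of range A = (ker A)ᗮ
  have hrange : ((LinearMap.range (A : H →ₗ[ℂ] H) : Submodule ℂ H))ᗮ = LinearMap.ker (A : H →ₗ[ℂ] H) := by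
    ext z
    simp only [Submodule.mem_orthogonal, LinearMap.mem_range, LinearMap.mem_ker]
    constructor
    · intro h
      have h2 : ⟪A z, A z⟫ = 0 := by
        have := h (A (A z)) ⟨A z, rfl⟩
        rwa [hAmove] at this
      simpa using inner_self_eq_zero.mp h2
    · rintro hz u ⟨y, rfl⟩
      rw [ContinuousLinearMap.coe_coe] at hz ⊢
      rw [hAmove, hz, inner_zero_right]
  have hclos : ((LinearMap.ker (A : H →ₗ[ℂ] H) : Submodule ℂ H))ᗮ = (LinearMap.range (A : H →ₗ[ℂ] H)).topologicalClosure := by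
    rw [← hrange, Submodule.orthogonal_orthogonal_eq_closure]
  have hmemclos : ∀ z : H, z ∈ ((LinearMap.ker (A : H →ₗ[ℂ] H) : Submodule ℂ H))ᗮ →
      z ∈ closure (Set.range A) := by
    intro z hz
    rw [hclos] at hz
    have : z ∈ closure ((LinearMap.range (A : H →ₗ[ℂ] H) : Submodule ℂ H) : Set H) := hz
    simpa [LinearMap.coe_range] using this
  haveI : CompleteSpace (LinearMap.ker (A : H →ₗ[ℂ] H)) := (ContinuousLinearMap.isClosed_ker A).completeSpace_coe
  by_cases hempty : ∃ x : H, vnormA A x = 1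
  swap
  · have hWe : W = ∅ := by
      ext r; simp only [hW, Set.mem_setOf_eq, Set.mem_empty_iff_false, iff_false]
      rintro ⟨x, hx, -⟩; exact hempty ⟨x, hx⟩
    have hNe : N = ∅ := by
      ext r; simp only [hN, Set.mem_setOf_eq, Set.mem_empty_iff_false, iff_false]
      rintro ⟨x, -, hx, -⟩; exact hempty ⟨x, hx⟩
    rw [wA, opNormA, ← hW, ← hN, hWe, hNe]
  obtain ⟨x₀, hx₀⟩ := hempty
  -- decomposition of a unit vector
  have decomp : ∀ x : H, vnormA A x = 1 → ∃ u : H, u ∈ closure (Set.range A) ∧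
      vnormA A u = 1 ∧ P u = P x ∧ P (R u) = P (R x) := by
    intro x hx
    set v : H := (Submodule.orthogonalProjection (LinearMap.ker (A : H →ₗ[ℂ] H)) x : H) with hv
    have hAv : A v = 0 := (Submodule.orthogonalProjection (LinearMap.ker (A : H →ₗ[ℂ] H)) x).2
    have hPv : P v = 0 := by
      have : ‖P v‖ ^ 2 = 0 := by rw [auxSqNormP hP hP2, hAv]; simp
      exact norm_eq_zero.mp (sq_eq_zero_iff.mp this)
    have hPRv : P (R v) = 0 := hker v (by rw [hPv, norm_zero])
    refine ⟨x - v, hmemclos _ (Submodule.sub_starProjection_mem_orthogonal (K := LinearMap.ker (A : H →ₗ[ℂ] H)) x), ?_, ?_, ?_⟩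
    · rw [hvn] at hx ⊢
      rw [map_sub, hPv, sub_zero, hx]
    · rw [map_sub, hPv, sub_zero]
    · rw [map_sub, map_sub, hPRv, sub_zero]
  have hx₀' := hx₀
  rw [hvn] at hx₀'
  have hWne : W.Nonempty := ⟨_, x₀, hx₀, rfl⟩
  have hsupWnn : 0 ≤ sSup W := by
    refine Real.sSup_nonneg ?_
    rintro r ⟨x, -, rfl⟩
    exact norm_nonneg _
  -- generalized numerical radius bound
  have qbound : ∀ z : H, ‖⟪A (R z), z⟫‖ ≤ sSup W * ‖P z‖ ^ 2 := by
    intro z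
    by_cases hz : ‖P z‖ = 0
    · have hAz0 : A z = 0 := by rw [hAz, norm_eq_zero.mp hz, map_zero]
      have : A (R z) = 0 := by rw [hARz, hAz0, map_zero]
      rw [this, inner_zero_left, norm_zero]
      positivity
    · have hzpos : 0 < ‖P z‖ := lt_of_le_of_ne (norm_nonneg _) (Ne.symm hz)
      set s : ℝ := ‖P z‖ with hs
      set z' : H := ((s⁻¹ : ℝ) : ℂ) • z with hz'
      have hz'1 : vnormA A z' = 1 := by
        rw [hvn, hz', map_smul, norm_smul]
        simp only [Complex.norm_real, norm_inv, Real.norm_eq_abs,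
          abs_of_pos hzpos]
        exact inv_mul_cancel₀ hz
      have hmem : ‖innA A (R z') z'‖ ∈ W := ⟨z', hz'1, rfl⟩
      have hle : ‖innA A (R z') z'‖ ≤ sSup W := le_csSup hWbdd hmem
      have hscale : innA A (R z') z' = ((s⁻¹ : ℝ) : ℂ) ^ 2 * ⟪A (R z), z⟫ := by
        rw [innA, hz', map_smul, map_smul, inner_smul_left, inner_smul_right,
          Complex.conj_ofReal]
        ring
      rw [hscale, norm_mul, norm_pow] at hle
      have habs : ‖((s⁻¹ : ℝ) : ℂ)‖ = s⁻¹ := by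
        rw [Complex.norm_real, Real.norm_eq_abs, abs_of_pos (inv_pos.mpr hzpos)]
      rw [habs] at hle
      calc ‖⟪A (R z), z⟫‖
          = s ^ 2 * (s⁻¹ ^ 2 * ‖⟪A (R z), z⟫‖) := by
            field_simp
        _ ≤ s ^ 2 * sSup W := by gcongr
        _ = sSup W * ‖P z‖ ^ 2 := by rw [hs]; ring
  -- polarization bound
  have polar : ∀ x : H, ‖P x‖ = 1 → ‖P (R x)‖ ≤ sSup W := by
    intro x hx
    by_cases hz : ‖P (R x)‖ = 0
    · rw [hz]; exact hsupWnn
    have hzpos : 0 < ‖P (R x)‖ := lt_of_le_of_ne (norm_nonneg _) (Ne.symm hz)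
    set c : ℝ := ‖P (R x)‖⁻¹ with hc
    set y : H := ((c : ℝ) : ℂ) • (R x) with hy
    have hPy : ‖P y‖ = 1 := by
      rw [hy, map_smul, norm_smul]
      simp only [Complex.norm_real, norm_inv, Real.norm_eq_abs, hc,
        abs_of_pos hzpos]
      exact inv_mul_cancel₀ hz
    have key4 : 4 * (⟪A (R x), y⟫).re
        = (⟪A (R (x + y)), x + y⟫).re - (⟪A (R (x - y)), x - y⟫).re := by
      have e3 : ⟪A (R y), x⟫ = (starRingEnd ℂ) ⟪A (R x), y⟫ := by
        rw [hsym, ← inner_conj_symm]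
      have e1 : ⟪A (R (x + y)), x + y⟫
          = ⟪A (R x), x⟫ + ⟪A (R x), y⟫ + (⟪A (R y), x⟫ + ⟪A (R y), y⟫) := by
        simp only [map_add, inner_add_left, inner_add_right]
        ring
      have e2 : ⟪A (R (x - y)), x - y⟫
          = ⟪A (R x), x⟫ - ⟪A (R x), y⟫ - (⟪A (R y), x⟫ - ⟪A (R y), y⟫) := by
        simp only [map_sub, inner_sub_left, inner_sub_right]
        ring
      rw [e1, e2, e3]
      simp only [Complex.add_re, Complex.sub_re, Complex.conj_re]
      ring
    have hb1 : (⟪A (R (x + y)), x + y⟫).re ≤ sSup W * ‖P (x + y)‖ ^ 2 :=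
      (Complex.re_le_norm _).trans (qbound _)
    have hb2 : -(sSup W * ‖P (x - y)‖ ^ 2) ≤ (⟪A (R (x - y)), x - y⟫).re := by
      have h1 : |(⟪A (R (x - y)), x - y⟫).re| ≤ sSup W * ‖P (x - y)‖ ^ 2 :=
        (Complex.abs_re_le_norm _).trans (qbound _)
      linarith [abs_le.mp h1]
    have hpar : ‖P (x + y)‖ ^ 2 + ‖P (x - y)‖ ^ 2 = 4 := by
      have := parallelogram_law_with_norm ℂ (P x) (P y)
      have h1 : P (x + y) = P x + P y := map_add _ _ _
      have h2 : P (x - y) = P x - P y := map_sub _ _ _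
      rw [h1, h2]
      rw [hx, hPy] at this
      rw [pow_two, pow_two]
      linarith
    have hre : (⟪A (R x), y⟫).re = ‖P (R x)‖ := by
      have h1 : ⟪A (R x), y⟫ = ((c : ℝ) : ℂ) * ⟪P (R x), P (R x)⟫ := by
        rw [hy, inner_smul_right, hAz, hPmove]
      have h2 : (⟪P (R x), P (R x)⟫ : ℂ).re = ‖P (R x)‖ ^ 2 := by
        have := @inner_self_eq_norm_sq ℂ _ _ _ _ (P (R x))
        simpa using this
      have h3 : (⟪P (R x), P (R x)⟫ : ℂ).im = 0 := by
        have := @inner_self_im ℂ _ _ _ _ (P (R x))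
        rwa [RCLike.im_to_complex] at this
      rw [h1, Complex.mul_re, Complex.ofReal_re, Complex.ofReal_im, h2, h3, hc]
      field_simp
      ring
    have : 4 * ‖P (R x)‖ ≤ sSup W * ‖P (x + y)‖ ^ 2 + sSup W * ‖P (x - y)‖ ^ 2 := by
      rw [← hre]
      linarith [key4, hb1, hb2]
    have h4 : sSup W * ‖P (x + y)‖ ^ 2 + sSup W * ‖P (x - y)‖ ^ 2 = 4 * sSup W := by
      rw [← mul_add, hpar]; ring
    linarith
  -- conclusion
  have goal1 : sSup W ≤ sSup N := by
    have hNn : 0 ≤ sSup N := by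
      obtain ⟨u, hu_mem, hu1, -, -⟩ := decomp x₀ hx₀
      have hmem : vnormA A (R u) ∈ N := ⟨u, hu_mem, hu1, rfl⟩
      exact le_trans (Real.sqrt_nonneg _) (le_csSup hNbdd hmem)
    refine Real.sSup_le ?_ hNn
    rintro r ⟨x, hx1, rfl⟩
    obtain ⟨u, hu_mem, hu1, hPu, hPRu⟩ := decomp x hx1
    have hmem : vnormA A (R u) ∈ N := ⟨u, hu_mem, hu1, rfl⟩
    have hx1' := hx1
    rw [hvn] at hx1'
    calc ‖innA A (R x) x‖
        ≤ ‖P (R x)‖ * ‖P x‖ := by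
          rw [hinn]
          exact norm_inner_le_norm _ _
      _ = vnormA A (R u) := by rw [hx1', mul_one, hvn, hPRu]
      _ ≤ sSup N := le_csSup hNbdd hmem
  have goal2 : sSup N ≤ sSup W := by
    refine Real.sSup_le ?_ hsupWnn
    rintro r ⟨x, -, hx1, rfl⟩
    rw [hvn] at hx1 ⊢
    exact polar x hx1
  rw [wA, opNormA, ← hW, ← hN]
  exact le_antisymm goal1 goal2


theorem stmt1 (A T S : H →L[ℂ] H) (hA : A.IsPositive) (hS : IsAAdjoint A T S)
    (θ : ℝ) :
    wA A ((2:ℂ)⁻¹ • (Complex.exp ((θ : ℝ) * Complex.I) • T + Complex.exp (-((θ : ℝ) * Complex.I)) • S)) = opNormA A ((2:ℂ)⁻¹ • (Complex.exp ((θ : ℝ) * Complex.I) • T + Complex.exp (-((θ : ℝ) * Complex.I)) • S)) := by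
  set e : ℂ := Complex.exp ((θ : ℝ) * Complex.I) with he
  set e' : ℂ := Complex.exp (-((θ : ℝ) * Complex.I)) with he'
  set R : H →L[ℂ] H := (2:ℂ)⁻¹ • (e • T + e' • S) with hRdef
  have hadjA : adjoint A = A := isSelfAdjoint_iff'.mp hA.isSelfAdjoint
  have hAS : A * S = adjoint T * A := hS
  have hSA : adjoint S * A = A * T := by
    have h1 := congrArg star hAS
    simp only [star_mul, star_eq_adjoint, adjoint_adjoint, hadjA] at h1
    exact h1
  have hconj_e : (starRingEnd ℂ) e = e' := by
    rw [he, he', ← Complex.exp_conj]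
    congr 1
    simp [Complex.ext_iff]
  have hconj_e' : (starRingEnd ℂ) e' = e := by
    rw [he, he', ← Complex.exp_conj]
    congr 1
    simp [Complex.ext_iff]
  have hconj_half : (starRingEnd ℂ) (2:ℂ)⁻¹ = (2:ℂ)⁻¹ := by
    rw [show ((2:ℂ))⁻¹ = ((2⁻¹:ℝ):ℂ) by norm_num, Complex.conj_ofReal]
  have hadjR : adjoint R = (2:ℂ)⁻¹ • (e' • adjoint T + e • adjoint S) := by
    rw [← star_eq_adjoint, hRdef]
    rw [star_smul, star_add, star_smul, star_smul]
    rw [star_eq_adjoint, star_eq_adjoint]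
    have h2 : (star (2:ℂ)⁻¹) = (2:ℂ)⁻¹ := hconj_half
    have h3 : star e = e' := hconj_e
    have h4 : star e' = e := hconj_e'
    rw [h2, h3, h4]
  apply auxWAeq A R hA
  have expand1 : A * R = (2:ℂ)⁻¹ • (e • (A * T) + e' • (A * S)) := by
    rw [hRdef, mul_smul_comm, mul_add, mul_smul_comm, mul_smul_comm]
  have expand2 : adjoint R * A = (2:ℂ)⁻¹ • (e' • (adjoint T * A) + e • (adjoint S * A)) := by
    rw [hadjR, smul_mul_assoc, add_mul, smul_mul_assoc, smul_mul_assoc]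
  rw [expand1, expand2, hAS, hSA, add_comm (e • (A * T))]
end
end

section
/- Let A be a positive operator and T ∈ B_A(H). Then w_A(T) = sup over θ ∈ ℝ of ‖Re_A(e^{iθ}T)‖_A, and also w_A(T) = sup over θ ∈ ℝ of ‖Im_A(e^{iθ}T)‖_A, where Re_A(S) = (S+S^{♯A})/2 and Im_A(S) = (S−S^{♯A})/(2i). -/
noncomputable section
open Complex ContinuousLinearMap

variable {H : Type*} [NormedAddCommGroup H] [InnerProductSpace ℂ H] [CompleteSpace H]

set_option linter.unusedSectionVars false

lemma innA_eq {A Q : H →L[ℂ] H} (hQ : IsSelfAdjoint Q) (hQ2 : Q * Q = A) (x y : H) :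
    innA A x y = inner ℂ (Q x) (Q y) := by
  have h : A x = Q (Q x) := by rw [← hQ2]; rfl
  have h2 : ContinuousLinearMap.adjoint Q = Q := by
    rwa [IsSelfAdjoint, ContinuousLinearMap.star_eq_adjoint] at hQ
  rw [innA, h]
  nth_rewrite 1 [← h2]
  rw [ContinuousLinearMap.adjoint_inner_left]

lemma vnormA_eq {A Q : H →L[ℂ] H} (hQ : IsSelfAdjoint Q) (hQ2 : Q * Q = A) (x : H) :
    vnormA A x = ‖Q x‖ := by
  rw [vnormA, innA_eq hQ hQ2, inner_self_eq_norm_sq_to_K (𝕜 := ℂ)]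
  norm_cast
  exact Real.sqrt_sq (norm_nonneg _)

lemma abs_innA_le {A Q : H →L[ℂ] H} (hQ : IsSelfAdjoint Q) (hQ2 : Q * Q = A) (x y : H) :
    ‖innA A x y‖ ≤ vnormA A x * vnormA A y := by
  rw [innA_eq hQ hQ2, vnormA_eq hQ hQ2, vnormA_eq hQ hQ2]
  exact norm_inner_le_norm _ _

lemma vnormA_nonneg (A : H →L[ℂ] H) (x : H) : 0 ≤ vnormA A x := Real.sqrt_nonneg _

lemma innA_shift {A R : H →L[ℂ] H} (hR : A * R = star R * A) (x y : H) :
    innA A (R x) y = innA A x (R y) := by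
  have h : A (R x) = (ContinuousLinearMap.adjoint R) (A x) := by
    rw [← ContinuousLinearMap.star_eq_adjoint]
    have := congrArg (fun (f : H →L[ℂ] H) => f x) hR
    simpa using this
  rw [innA, h, ContinuousLinearMap.adjoint_inner_left, innA]

lemma innA_conj {A Q : H →L[ℂ] H} (hQ : IsSelfAdjoint Q) (hQ2 : Q * Q = A) (x y : H) :
    starRingEnd ℂ (innA A x y) = innA A y x := by
  rw [innA_eq hQ hQ2, innA_eq hQ hQ2, inner_conj_symm]

lemma le_of_pow_two_pow_le {a b c : ℝ} (ha : 0 ≤ a) (hb : 0 ≤ b)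
    (h : ∀ m : ℕ, a ^ (2 ^ m) ≤ b ^ (2 ^ m) * c) : a ≤ b := by
  by_contra hlt
  push_neg at hlt
  have ha' : 0 < a := lt_of_le_of_lt hb hlt
  rcases eq_or_lt_of_le hb with hb0 | hb0
  · have := h 1
    rw [← hb0] at this
    simp at this
    nlinarith [pow_pos ha' (2 ^ 1), this]
  · set r := a / b with hr
    have hr1 : 1 < r := (one_lt_div hb0).2 hlt
    have hc : ∀ m : ℕ, r ^ (2 ^ m) ≤ c := by
      intro m
      rw [hr, div_pow, div_le_iff₀ (pow_pos hb0 _)]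
      linarith [h m]
    obtain ⟨m, hm⟩ := pow_unbounded_of_one_lt c hr1
    have h1 : r ^ m ≤ r ^ (2 ^ m) :=
      pow_le_pow_right₀ hr1.le (Nat.le_of_lt (Nat.lt_two_pow_self))
    linarith [hc m]

lemma selfadj_sq {A R : H →L[ℂ] H} (hR : A * R = star R * A) :
    A * (R * R) = star (R * R) * A := by
  rw [← mul_assoc, hR, mul_assoc, hR, ← mul_assoc, ← star_mul]

lemma vnormA_step {A Q R : H →L[ℂ] H} (hQ : IsSelfAdjoint Q) (hQ2 : Q * Q = A)
    (hR : A * R = star R * A) (x : H) :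
    vnormA A (R x) ^ 2 ≤ vnormA A x * vnormA A (R (R x)) := by
  have h1 : vnormA A (R x) ^ 2 = ‖innA A (R x) (R x)‖ := by
    rw [innA_eq hQ hQ2, vnormA_eq hQ hQ2,
      inner_self_eq_norm_sq_to_K (𝕜 := ℂ)]
    norm_cast
    simp
  rw [h1, innA_shift hR]
  exact abs_innA_le hQ hQ2 _ _

lemma vnormA_iter {A Q : H →L[ℂ] H} (hQ : IsSelfAdjoint Q) (hQ2 : Q * Q = A) (m : ℕ) :
    ∀ R : H →L[ℂ] H, A * R = star R * A → ∀ x : H,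
      vnormA A (R x) ^ (2 ^ m) ≤ vnormA A x ^ (2 ^ m - 1) * vnormA A ((R ^ (2 ^ m)) x) := by
  induction m with
  | zero => intro R hR x; simp
  | succ m ih =>
    intro R hR x
    have h2 : (0:ℕ) < 2 ^ m := Nat.two_pow_pos m
    have e1 : vnormA A (R x) ^ (2 ^ (m+1)) = (vnormA A (R x) ^ 2) ^ (2 ^ m) := by
      rw [← pow_mul, mul_comm, pow_succ]
    have step := vnormA_step hQ hQ2 hR x
    have e2 : (vnormA A (R x) ^ 2) ^ (2 ^ m) ≤ (vnormA A x * vnormA A ((R * R) x)) ^ (2 ^ m) := by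
      apply pow_le_pow_left₀ (sq_nonneg _)
      simpa [ContinuousLinearMap.mul_apply] using step
    have e3 : (vnormA A x * vnormA A ((R * R) x)) ^ (2 ^ m)
        = vnormA A x ^ (2 ^ m) * vnormA A ((R * R) x) ^ (2 ^ m) := mul_pow _ _ _
    have e4 := ih (R * R) (selfadj_sq hR) x
    have h22 : 2 * 2 ^ m = 2 ^ (m+1) := by ring
    have e5 : ((R * R) ^ (2 ^ m)) x = (R ^ (2 ^ (m+1))) x := by
      rw [← pow_two, ← pow_mul, h22]

    calc vnormA A (R x) ^ (2 ^ (m+1)) = (vnormA A (R x) ^ 2) ^ (2 ^ m) := e1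
      _ ≤ vnormA A x ^ (2 ^ m) * vnormA A ((R * R) x) ^ (2 ^ m) := by rw [← e3]; exact e2
      _ ≤ vnormA A x ^ (2 ^ m) * (vnormA A x ^ (2 ^ m - 1) * vnormA A (((R*R) ^ (2 ^ m)) x)) := by
          apply mul_le_mul_of_nonneg_left e4 (pow_nonneg (vnormA_nonneg A x) _)
      _ = vnormA A x ^ (2 ^ (m+1) - 1) * vnormA A ((R ^ (2 ^ (m+1))) x) := by
          rw [e5, ← mul_assoc, ← pow_add]
          congr 2
          omega

lemma vnormA_bound {A Q R : H →L[ℂ] H} (hQ : IsSelfAdjoint Q) (hQ2 : Q * Q = A)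
    (hR : A * R = star R * A) (x : H) :
    vnormA A (R x) ≤ ‖R‖ * vnormA A x := by
  rcases eq_or_lt_of_le (vnormA_nonneg A x) with hn | hn
  · have step := vnormA_step hQ hQ2 hR x
    have h0 : vnormA A (R x) = 0 := by
      nlinarith [vnormA_nonneg A (R x), vnormA_nonneg A (R (R x))]
    rw [h0, ← hn, mul_zero]
  · apply le_of_pow_two_pow_le (vnormA_nonneg _ _)
      (mul_nonneg (norm_nonneg _) (vnormA_nonneg _ _)) (c := ‖Q‖ * ‖x‖ / vnormA A x)
    intro m
    set n := vnormA A x with hnn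
    have h1 := vnormA_iter hQ hQ2 m R hR x
    have h2 : vnormA A ((R ^ 2 ^ m) x) ≤ ‖Q‖ * (‖R‖ ^ 2 ^ m * ‖x‖) := by
      rw [vnormA_eq hQ hQ2]
      calc ‖Q ((R ^ 2 ^ m) x)‖ ≤ ‖Q‖ * ‖(R ^ 2 ^ m) x‖ := le_opNorm _ _
        _ ≤ ‖Q‖ * (‖R ^ 2 ^ m‖ * ‖x‖) :=
            mul_le_mul_of_nonneg_left (le_opNorm _ _) (norm_nonneg _)
        _ ≤ ‖Q‖ * (‖R‖ ^ 2 ^ m * ‖x‖) := by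
            apply mul_le_mul_of_nonneg_left _ (norm_nonneg _)
            apply mul_le_mul_of_nonneg_right _ (norm_nonneg _)
            exact norm_pow_le' R (Nat.two_pow_pos _)
    have hpow : n ^ (2 ^ m) = n ^ (2 ^ m - 1) * n := by
      rw [← pow_succ]
      congr 1
      have := Nat.two_pow_pos m
      omega
    have key : n ^ (2 ^ m - 1) * (‖Q‖ * (‖R‖ ^ 2 ^ m * ‖x‖))
        = (‖R‖ * n) ^ 2 ^ m * (‖Q‖ * ‖x‖ / n) := by
      rw [mul_pow]
      field_simp
      rw [hpow]
      ring
    calc vnormA A (R x) ^ 2 ^ m ≤ n ^ (2 ^ m - 1) * vnormA A ((R ^ 2 ^ m) x) := h1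
      _ ≤ n ^ (2 ^ m - 1) * (‖Q‖ * (‖R‖ ^ 2 ^ m * ‖x‖)) :=
          mul_le_mul_of_nonneg_left h2 (pow_nonneg hn.le _)
      _ = (‖R‖ * n) ^ 2 ^ m * (‖Q‖ * ‖x‖ / n) := key

lemma abs_innA_unit_le {A Q R : H →L[ℂ] H} (hQ : IsSelfAdjoint Q) (hQ2 : Q * Q = A)
    (hR : A * R = star R * A) (x : H) (hx : vnormA A x = 1) :
    ‖innA A (R x) x‖ ≤ ‖R‖ := by
  calc ‖innA A (R x) x‖ ≤ vnormA A (R x) * vnormA A x := abs_innA_le hQ hQ2 _ _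
    _ = vnormA A (R x) := by rw [hx, mul_one]
    _ ≤ ‖R‖ * vnormA A x := vnormA_bound hQ hQ2 hR x
    _ = ‖R‖ := by rw [hx, mul_one]

lemma innA_smul_left (A : H →L[ℂ] H) (a : ℂ) (u v : H) :
    innA A (a • u) v = starRingEnd ℂ a * innA A u v := by
  simp [innA, map_smul, inner_smul_left, mul_comm]

lemma innA_smul_right (A : H →L[ℂ] H) (a : ℂ) (u v : H) :
    innA A u (a • v) = a * innA A u v := by
  simp [innA, inner_smul_right]

lemma wA_nonneg (A R : H →L[ℂ] H) : 0 ≤ wA A R :=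
  Real.sSup_nonneg (by rintro r ⟨x, hx, rfl⟩; exact norm_nonneg _)

lemma opNormA_nonneg (A R : H →L[ℂ] H) : 0 ≤ opNormA A R :=
  Real.sSup_nonneg (by rintro r ⟨x, hx, hx1, rfl⟩; exact vnormA_nonneg _ _)

lemma wA_bddAbove {A Q R : H →L[ℂ] H} (hQ : IsSelfAdjoint Q) (hQ2 : Q * Q = A)
    (hR : A * R = star R * A) :
    BddAbove {r : ℝ | ∃ x : H, vnormA A x = 1 ∧ r = ‖innA A (R x) x‖} := by
  refine ⟨‖R‖, ?_⟩
  rintro r ⟨x, hx, rfl⟩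
  exact abs_innA_unit_le hQ hQ2 hR x hx

lemma opNormA_bddAbove {A Q R : H →L[ℂ] H} (hQ : IsSelfAdjoint Q) (hQ2 : Q * Q = A)
    (hR : A * R = star R * A) :
    BddAbove {r : ℝ | ∃ x : H, x ∈ closure (Set.range A) ∧ vnormA A x = 1 ∧ r = vnormA A (R x)} := by
  refine ⟨‖R‖, ?_⟩
  rintro r ⟨x, hxc, hx, rfl⟩
  calc vnormA A (R x) ≤ ‖R‖ * vnormA A x := vnormA_bound hQ hQ2 hR x
    _ = ‖R‖ := by rw [hx, mul_one]

lemma vnormA_smul_inv {A Q : H →L[ℂ] H} (hQ : IsSelfAdjoint Q) (hQ2 : Q * Q = A)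
    (z : H) (t : ℝ) (ht : vnormA A z = t) (htpos : 0 < t) :
    vnormA A (((t⁻¹ : ℝ) : ℂ) • z) = 1 := by
  rw [vnormA_eq hQ hQ2, map_smul, norm_smul, ← vnormA_eq hQ hQ2 (Q := Q), ht]
  simp [abs_of_pos htpos]
  exact inv_mul_cancel₀ htpos.ne'

lemma abs_innA_le_wA {A Q R : H →L[ℂ] H} (hQ : IsSelfAdjoint Q) (hQ2 : Q * Q = A)
    (hR : A * R = star R * A) (z : H) :
    ‖innA A (R z) z‖ ≤ wA A R * vnormA A z ^ 2 := by
  rcases eq_or_lt_of_le (vnormA_nonneg A z) with hn | hn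
  · have : ‖innA A (R z) z‖ ≤ vnormA A (R z) * vnormA A z := abs_innA_le hQ hQ2 _ _
    rw [← hn] at this ⊢
    simpa using this
  · set t := vnormA A z with htd
    set x := ((t⁻¹ : ℝ) : ℂ) • z with hxd
    have hx1 : vnormA A x = 1 := vnormA_smul_inv hQ hQ2 z t rfl hn
    have hmem : ‖innA A (R x) x‖
        ∈ {r : ℝ | ∃ x : H, vnormA A x = 1 ∧ r = ‖innA A (R x) x‖} :=
      ⟨x, hx1, rfl⟩
    have hle : ‖innA A (R x) x‖ ≤ wA A R :=
      le_csSup (wA_bddAbove hQ hQ2 hR) hmem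
    have hcomp : ‖innA A (R x) x‖ = t⁻¹ * (t⁻¹ * ‖innA A (R z) z‖) := by
      rw [hxd, map_smul, innA_smul_left, innA_smul_right, norm_mul, norm_mul]
      simp [abs_of_pos hn]
      try ring
    rw [hcomp] at hle
    have ht2 : ‖innA A (R z) z‖
        = t ^ 2 * (t⁻¹ * (t⁻¹ * ‖innA A (R z) z‖)) := by
      field_simp
    rw [ht2]
    calc t ^ 2 * (t⁻¹ * (t⁻¹ * ‖innA A (R z) z‖)) ≤ t ^ 2 * wA A R :=
          mul_le_mul_of_nonneg_left hle (sq_nonneg t)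
      _ = wA A R * t ^ 2 := mul_comm _ _

lemma innA_add_left (A : H →L[ℂ] H) (u v w : H) :
    innA A (u + v) w = innA A u w + innA A v w := by simp [innA, map_add, inner_add_left]

lemma innA_add_right (A : H →L[ℂ] H) (u v w : H) :
    innA A u (v + w) = innA A u v + innA A u w := by simp [innA, inner_add_right]

lemma innA_expand {A R : H →L[ℂ] H} (x y : H) :
    innA A (R (x + y)) (x + y) - innA A (R (x - y)) (x - y)
      = 2 * (innA A (R x) y + innA A (R y) x) := by
  have hxy : R (x + y) = R x + R y := map_add _ _ _
  have hxy' : R (x - y) = R x - R y := map_sub _ _ _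
  rw [hxy, hxy']
  simp only [innA, map_add, map_sub, inner_add_left, inner_add_right, inner_sub_left,
    inner_sub_right]
  ring

lemma parA {A Q : H →L[ℂ] H} (hQ : IsSelfAdjoint Q) (hQ2 : Q * Q = A) (x y : H) :
    vnormA A (x + y) ^ 2 + vnormA A (x - y) ^ 2 = 2 * (vnormA A x ^ 2 + vnormA A y ^ 2) := by
  simp only [vnormA_eq hQ hQ2, map_add, map_sub, sq]
  simpa only [sq] using parallelogram_law_with_norm ℂ (Q x) (Q y)

lemma re_innA_le {A Q R : H →L[ℂ] H} (hQ : IsSelfAdjoint Q) (hQ2 : Q * Q = A)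
    (hR : A * R = star R * A) (x y : H) :
    4 * (innA A (R x) y).re ≤ 2 * wA A R * (vnormA A x ^ 2 + vnormA A y ^ 2) := by
  have hconj : innA A (R y) x = starRingEnd ℂ (innA A (R x) y) := by
    rw [innA_shift hR y x]
    exact (innA_conj hQ hQ2 (R x) y).symm
  have hre : (innA A (R (x + y)) (x + y)).re - (innA A (R (x - y)) (x - y)).re
      = 4 * (innA A (R x) y).re := by
    have h := innA_expand (A := A) (R := R) x y
    rw [hconj, Complex.add_conj] at h
    have h2 := congrArg Complex.re h
    simp only [Complex.sub_re, Complex.mul_re, Complex.ofReal_re, Complex.ofReal_im] at h2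
    norm_num at h2
    rw [show R (x + y) = R x + R y from map_add _ _ _,
        show R (x - y) = R x - R y from map_sub _ _ _]
    linarith
  have b1 : (innA A (R (x + y)) (x + y)).re ≤ wA A R * vnormA A (x + y) ^ 2 :=
    le_trans (Complex.re_le_norm _) (abs_innA_le_wA hQ hQ2 hR (x + y))
  have b2 : -(wA A R * vnormA A (x - y) ^ 2) ≤ (innA A (R (x - y)) (x - y)).re := by
    have h := abs_innA_le_wA hQ hQ2 hR (x - y)
    have h2 := Complex.abs_re_le_norm (innA A (R (x - y)) (x - y))
    have h3 := abs_le.mp (le_trans h2 h)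
    linarith [h3.1]
  have hpar := parA hQ hQ2 x y
  have h5 : 4 * (innA A (R x) y).re
      ≤ wA A R * (vnormA A (x + y) ^ 2 + vnormA A (x - y) ^ 2) := by
    rw [mul_add]
    linarith
  rw [hpar] at h5
  linarith

lemma opNormA_le_wA {A Q R : H →L[ℂ] H} (hQ : IsSelfAdjoint Q) (hQ2 : Q * Q = A)
    (hR : A * R = star R * A) : opNormA A R ≤ wA A R := by
  unfold opNormA
  apply Real.sSup_le _ (wA_nonneg A R)
  rintro r ⟨u, huc, hu1, rfl⟩
  rcases eq_or_lt_of_le (vnormA_nonneg A (R u)) with hs | hs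
  · rw [← hs]; exact wA_nonneg A R
  · set s := vnormA A (R u) with hsd
    set y := ((s⁻¹ : ℝ) : ℂ) • R u with hyd
    have hy1 : vnormA A y = 1 := vnormA_smul_inv hQ hQ2 (R u) s rfl hs
    have hself : innA A (R u) (R u) = ((s ^ 2 : ℝ) : ℂ) := by
      rw [innA_eq hQ hQ2, inner_self_eq_norm_sq_to_K, hsd, vnormA_eq hQ hQ2]
      norm_cast
      try ring
    have hrey : (innA A (R u) y).re = s := by
      rw [hyd, innA_smul_right, hself]
      norm_cast
      field_simp
      try ring
    have h4 := re_innA_le hQ hQ2 hR u y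
    rw [hu1, hy1, hrey] at h4
    norm_num at h4
    linarith

lemma wA_le_opNormA {A Q R : H →L[ℂ] H} (hQ : IsSelfAdjoint Q) (hQ2 : Q * Q = A)
    (hAsa : IsSelfAdjoint A) (hR : A * R = star R * A) : wA A R ≤ opNormA A R := by
  unfold wA
  apply Real.sSup_le _ (opNormA_nonneg A R)
  rintro r ⟨x, hx1, rfl⟩
  set U := (LinearMap.range (A : H →ₗ[ℂ] H)).topologicalClosure with hUd
  haveI : CompleteSpace U := (Submodule.isClosed_topologicalClosure _).completeSpace_coe
  set u : H := (U.orthogonalProjectionOnto x : H) with hud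
  have hk : x - u ∈ Uᗮ := U.sub_starProjection_mem_orthogonal x
  have hmemU : ∀ y : H, A y ∈ U := fun y =>
    (LinearMap.range (A : H →ₗ[ℂ] H)).le_topologicalClosure ⟨y, rfl⟩
  have h0 : ∀ y : H, (inner ℂ (A y) (x - u) : ℂ) = 0 := fun y =>
    Submodule.inner_right_of_mem_orthogonal (hmemU y) hk
  have hAdj : ContinuousLinearMap.adjoint A = A := by
    rwa [IsSelfAdjoint, ContinuousLinearMap.star_eq_adjoint] at hAsa
  have hAk : A (x - u) = 0 := by
    have h1 : (inner ℂ (A (x - u)) (A (x - u)) : ℂ) = 0 := by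
      have h2 := h0 (A (x - u))
      calc (inner ℂ (A (x - u)) (A (x - u)) : ℂ)
          = inner ℂ ((ContinuousLinearMap.adjoint A) (A (x - u))) (x - u) := by
            rw [ContinuousLinearMap.adjoint_inner_left]
        _ = inner ℂ (A (A (x - u))) (x - u) := by rw [hAdj]
        _ = 0 := h2
    exact inner_self_eq_zero.mp h1
  have hAx : A x = A u := by
    have h := map_sub A x u
    rw [hAk] at h
    exact sub_eq_zero.mp h.symm
  have hx_eq : x = u + (x - u) := by abel
  have hinn_uu : innA A x x = innA A u u := by
    rw [innA, innA, hAx]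
    conv_lhs => rw [hx_eq]
    rw [inner_add_right, h0 u, add_zero]
  have hvu : vnormA A u = 1 := by
    rw [vnormA, ← hinn_uu]
    exact hx1
  have hRxu : innA A (R x) x = innA A (R u) u := by
    have e : ∀ z : H, A (R z) = (star R) (A z) := fun z => by
      have := congrArg (fun f : H →L[ℂ] H => f z) hR
      simpa using this
    have hARx : A (R x) = A (R u) := by rw [e x, e u, hAx]
    rw [innA, innA, hARx]
    conv_lhs => rw [hx_eq]
    rw [inner_add_right, h0 (R u), add_zero]
  have huc : u ∈ closure (Set.range ⇑A) := by
    have hUs : (U : Set H) = closure (Set.range ⇑A) := by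
      rw [hUd, Submodule.topologicalClosure_coe]
      rfl
    rw [← hUs]
    exact (U.orthogonalProjectionOnto x).2
  have hmem : vnormA A (R u)
      ∈ {r : ℝ | ∃ x : H, x ∈ closure (Set.range ⇑A) ∧ vnormA A x = 1 ∧ r = vnormA A (R x)} :=
    ⟨u, huc, hvu, rfl⟩
  calc ‖innA A (R x) x‖ = ‖innA A (R u) u‖ := by rw [hRxu]
    _ ≤ vnormA A (R u) * vnormA A u := abs_innA_le hQ hQ2 _ _
    _ = vnormA A (R u) := by rw [hvu, mul_one]
    _ ≤ opNormA A R := by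
        unfold opNormA
        exact le_csSup (opNormA_bddAbove hQ hQ2 hR) hmem

lemma innA_sub_left (A : H →L[ℂ] H) (u v w : H) :
    innA A (u - v) w = innA A u w - innA A v w := by simp [innA, map_sub, inner_sub_left]

lemma hT_of_hS {A T S : H →L[ℂ] H} (hAsa : IsSelfAdjoint A) (hS : A * S = star T * A) :
    A * T = star S * A := by
  have h := congrArg star hS
  rw [star_mul, star_mul, star_star, hAsa.star_eq] at h
  exact h.symm

lemma selfadjRe {A T S : H →L[ℂ] H} (hS : A * S = star T * A) (hT : A * T = star S * A) (c : ℂ) :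
    A * ((2:ℂ)⁻¹ • (c • T + (starRingEnd ℂ c) • S))
      = star ((2:ℂ)⁻¹ • (c • T + (starRingEnd ℂ c) • S)) * A := by
  simp only [star_smul, star_add, smul_mul_assoc, mul_smul_comm, mul_add, add_mul,
    hS, hT, Complex.star_def, Complex.conj_conj, map_inv₀, map_ofNat]
  module

lemma selfadjIm {A T S : H →L[ℂ] H} (hS : A * S = star T * A) (hT : A * T = star S * A) (c : ℂ) :
    A * ((2 * Complex.I)⁻¹ • (c • T - (starRingEnd ℂ c) • S))
      = star ((2 * Complex.I)⁻¹ • (c • T - (starRingEnd ℂ c) • S)) * A := by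
  simp only [star_smul, star_sub, smul_mul_assoc, mul_smul_comm, mul_sub, sub_mul,
    hS, hT, Complex.star_def, Complex.conj_conj, map_inv₀, map_mul, map_ofNat, Complex.conj_I]
  module

lemma scRe (c z : ℂ) : (starRingEnd ℂ (2:ℂ)⁻¹) * ((starRingEnd ℂ c) * z + c * (starRingEnd ℂ z))
    = (((starRingEnd ℂ c * z).re : ℝ) : ℂ) := by
  apply Complex.ext <;>
    simp [Complex.mul_re, Complex.mul_im, Complex.add_re, Complex.add_im] <;> ring

lemma scIm (c z : ℂ) :
    (starRingEnd ℂ (2 * Complex.I)⁻¹) * ((starRingEnd ℂ c) * z - c * (starRingEnd ℂ z))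
    = -(((starRingEnd ℂ c * z).im : ℝ) : ℂ) := by
  apply Complex.ext <;>
    simp [Complex.mul_re, Complex.mul_im, Complex.add_re, Complex.add_im, Complex.inv_re,
      Complex.inv_im, Complex.normSq] <;> ring

lemma innA_S {A T S : H →L[ℂ] H} (hAsa : IsSelfAdjoint A) (hS : A * S = star T * A) (x : H) :
    innA A (S x) x = starRingEnd ℂ (innA A (T x) x) := by
  have hAdj : ContinuousLinearMap.adjoint A = A := by
    rwa [IsSelfAdjoint, ContinuousLinearMap.star_eq_adjoint] at hAsa
  have e : A (S x) = (star T) (A x) := by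
    have := congrArg (fun f : H →L[ℂ] H => f x) hS
    simpa using this
  calc innA A (S x) x = inner ℂ ((ContinuousLinearMap.adjoint T) (A x)) x := by
        rw [innA, e, ContinuousLinearMap.star_eq_adjoint]
    _ = inner ℂ (A x) (T x) := ContinuousLinearMap.adjoint_inner_left _ _ _
    _ = starRingEnd ℂ (inner ℂ (T x) (A x)) := (inner_conj_symm _ _).symm
    _ = starRingEnd ℂ (inner ℂ ((ContinuousLinearMap.adjoint A) (T x)) x) := by
        rw [ContinuousLinearMap.adjoint_inner_left]
    _ = starRingEnd ℂ (innA A (T x) x) := by rw [hAdj, innA]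

lemma innA_ReOp {A T S : H →L[ℂ] H} (hAsa : IsSelfAdjoint A) (hS : A * S = star T * A)
    (c : ℂ) (x : H) :
    innA A (((2:ℂ)⁻¹ • (c • T + (starRingEnd ℂ c) • S)) x) x
      = (((starRingEnd ℂ c * innA A (T x) x).re : ℝ) : ℂ) := by
  have happ : ((2:ℂ)⁻¹ • (c • T + (starRingEnd ℂ c) • S)) x
      = (2:ℂ)⁻¹ • (c • T x + (starRingEnd ℂ c) • S x) := by simp
  rw [happ, innA_smul_left, innA_add_left, innA_smul_left, innA_smul_left, innA_S hAsa hS,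
    Complex.conj_conj]
  exact scRe c (innA A (T x) x)

lemma innA_ImOp {A T S : H →L[ℂ] H} (hAsa : IsSelfAdjoint A) (hS : A * S = star T * A)
    (c : ℂ) (x : H) :
    innA A (((2 * Complex.I)⁻¹ • (c • T - (starRingEnd ℂ c) • S)) x) x
      = -(((starRingEnd ℂ c * innA A (T x) x).im : ℝ) : ℂ) := by
  have happ : ((2 * Complex.I)⁻¹ • (c • T - (starRingEnd ℂ c) • S)) x
      = (2 * Complex.I)⁻¹ • (c • T x - (starRingEnd ℂ c) • S x) := by simp
  rw [happ, innA_smul_left, innA_sub_left, innA_smul_left, innA_smul_left, innA_S hAsa hS,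
    Complex.conj_conj]
  exact scIm c (innA A (T x) x)

lemma conj_exp_theta (θ : ℝ) :
    starRingEnd ℂ (Complex.exp ((θ:ℂ) * Complex.I)) = Complex.exp (-((θ:ℂ) * Complex.I)) := by
  rw [← Complex.exp_conj, map_mul, Complex.conj_ofReal, Complex.conj_I, mul_neg]

lemma choiceRe (z : ℂ) :
    starRingEnd ℂ (Complex.exp ((z.arg : ℂ) * Complex.I)) * z = ((‖z‖ : ℝ) : ℂ) := by
  rw [conj_exp_theta]
  have h := Complex.norm_mul_exp_arg_mul_I z
  calc Complex.exp (-((z.arg:ℂ) * Complex.I)) * z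
      = Complex.exp (-((z.arg:ℂ) * Complex.I)) * ((‖z‖ : ℂ) * Complex.exp ((z.arg:ℂ) * Complex.I)) := by
        rw [h]
    _ = (‖z‖ : ℂ) * Complex.exp (-((z.arg:ℂ) * Complex.I) + (z.arg:ℂ) * Complex.I) := by
        rw [Complex.exp_add]; ring
    _ = ((‖z‖ : ℝ) : ℂ) := by simp

lemma choiceIm (z : ℂ) :
    -((starRingEnd ℂ (Complex.exp (((z.arg + Real.pi/2 : ℝ) : ℂ) * Complex.I)) * z).im) = ‖z‖ := by
  rw [conj_exp_theta]
  have h := Complex.norm_mul_exp_arg_mul_I z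
  have key : Complex.exp (-(((z.arg + Real.pi/2 : ℝ):ℂ) * Complex.I)) * z
      = (‖z‖ : ℂ) * Complex.exp (((-(Real.pi/2) : ℝ):ℂ) * Complex.I) := by
    calc Complex.exp (-(((z.arg + Real.pi/2 : ℝ):ℂ) * Complex.I)) * z
        = Complex.exp (-(((z.arg + Real.pi/2 : ℝ):ℂ) * Complex.I)) * ((‖z‖ : ℂ) * Complex.exp ((z.arg:ℂ) * Complex.I)) := by
          rw [h]
      _ = (‖z‖ : ℂ) * Complex.exp (-(((z.arg + Real.pi/2 : ℝ):ℂ) * Complex.I) + (z.arg:ℂ) * Complex.I) := by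
          rw [Complex.exp_add]; ring
      _ = (‖z‖ : ℂ) * Complex.exp (((-(Real.pi/2) : ℝ):ℂ) * Complex.I) := by
          congr 1
          push_cast
          ring
  rw [key, Complex.exp_mul_I]
  push_cast
  simp


set_option maxHeartbeats 1000000 in
set_option synthInstance.maxHeartbeats 400000 in
theorem stmt2 (A T S : H →L[ℂ] H) (hA : A.IsPositive) (hS : IsAAdjoint A T S) :
    wA A T = sSup {r : ℝ | ∃ θ : ℝ, r = opNormA A ((2:ℂ)⁻¹ • (Complex.exp ((θ : ℝ) * Complex.I) • T + Complex.exp (-((θ : ℝ) * Complex.I)) • S))} ∧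
    wA A T = sSup {r : ℝ | ∃ θ : ℝ, r = opNormA A ((2 * Complex.I)⁻¹ • (Complex.exp ((θ : ℝ) * Complex.I) • T - Complex.exp (-((θ : ℝ) * Complex.I)) • S))} := by
  have h0 : (0 : H →L[ℂ] H) ≤ A := A.nonneg_iff_isPositive.2 hA
  set Q : H →L[ℂ] H := CFC.sqrt A with hQd
  have hQ : IsSelfAdjoint Q := IsSelfAdjoint.of_nonneg (CFC.sqrt_nonneg A)
  have hQ2 : Q * Q = A := CFC.sqrt_mul_sqrt_self A h0
  have hAsa : IsSelfAdjoint A := hA.isSelfAdjoint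
  have hS' : A * S = star T * A := by
    rw [IsAAdjoint] at hS
    rw [ContinuousLinearMap.mul_def, ContinuousLinearMap.mul_def, hS,
      ContinuousLinearMap.star_eq_adjoint]
  have hT' : A * T = star S * A := hT_of_hS hAsa hS'
  -- boundedness of the wA set of T
  have hWbdd : BddAbove {r : ℝ | ∃ x : H, vnormA A x = 1 ∧ r = ‖innA A (T x) x‖} := by
    refine ⟨‖(2:ℂ)⁻¹ • ((1:ℂ) • T + (1:ℂ) • S)‖
      + ‖(2 * Complex.I)⁻¹ • ((1:ℂ) • T - (1:ℂ) • S)‖, ?_⟩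
    rintro r ⟨x, hx, rfl⟩
    have h1 := abs_innA_unit_le hQ hQ2 (selfadjRe hS' hT' 1) x hx
    have h2 := abs_innA_unit_le hQ hQ2 (selfadjIm hS' hT' 1) x hx
    rw [innA_ReOp hAsa hS' 1 x] at h1
    rw [innA_ImOp hAsa hS' 1 x] at h2
    simp only [map_one, one_mul] at h1 h2
    rw [Complex.norm_real, Real.norm_eq_abs] at h1
    rw [← Complex.ofReal_neg, Complex.norm_real, Real.norm_eq_abs, abs_neg] at h2
    calc ‖innA A (T x) x‖
        ≤ |(innA A (T x) x).re| + |(innA A (T x) x).im| :=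
          Complex.norm_le_abs_re_add_abs_im _
      _ ≤ _ := add_le_add h1 h2
  constructor
  · -- real part family
    have hRform : ∀ θ : ℝ,
        ((2:ℂ)⁻¹ • (Complex.exp ((θ:ℂ) * Complex.I) • T + Complex.exp (-((θ:ℂ) * Complex.I)) • S))
          = ((2:ℂ)⁻¹ • (Complex.exp ((θ:ℂ) * Complex.I) • T
              + (starRingEnd ℂ (Complex.exp ((θ:ℂ) * Complex.I))) • S)) := fun θ => by
      rw [conj_exp_theta]
    have hOple : ∀ θ : ℝ, opNormA A ((2:ℂ)⁻¹ • (Complex.exp ((θ:ℂ) * Complex.I) • T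
        + Complex.exp (-((θ:ℂ) * Complex.I)) • S)) ≤ wA A T := by
      intro θ
      rw [hRform θ]
      have h1 := opNormA_le_wA hQ hQ2 (selfadjRe hS' hT' (Complex.exp ((θ:ℂ) * Complex.I)))
      have h2 : wA A ((2:ℂ)⁻¹ • (Complex.exp ((θ:ℂ) * Complex.I) • T
          + (starRingEnd ℂ (Complex.exp ((θ:ℂ) * Complex.I))) • S)) ≤ wA A T := by
        unfold wA
        apply Real.sSup_le _ (by exact wA_nonneg A T)
        rintro r ⟨x, hx, rfl⟩
        rw [innA_ReOp hAsa hS' _ x]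
        calc ‖(((starRingEnd ℂ (Complex.exp ((θ:ℂ) * Complex.I))
              * innA A (T x) x).re : ℝ) : ℂ)‖
            = |(starRingEnd ℂ (Complex.exp ((θ:ℂ) * Complex.I)) * innA A (T x) x).re| :=
              by rw [Complex.norm_real, Real.norm_eq_abs]
          _ ≤ ‖starRingEnd ℂ (Complex.exp ((θ:ℂ) * Complex.I)) * innA A (T x) x‖ :=
              Complex.abs_re_le_norm _
          _ = ‖innA A (T x) x‖ := by
              rw [norm_mul, Complex.norm_conj, Complex.norm_exp_ofReal_mul_I, one_mul]
          _ ≤ wA A T := le_csSup hWbdd ⟨x, hx, rfl⟩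
      linarith
    have hbdd1 : BddAbove {r : ℝ | ∃ θ : ℝ, r = opNormA A ((2:ℂ)⁻¹
        • (Complex.exp ((θ:ℂ) * Complex.I) • T + Complex.exp (-((θ:ℂ) * Complex.I)) • S))} := by
      refine ⟨wA A T, ?_⟩
      rintro r ⟨θ, rfl⟩
      exact hOple θ
    have h0le : 0 ≤ sSup {r : ℝ | ∃ θ : ℝ, r = opNormA A ((2:ℂ)⁻¹
        • (Complex.exp ((θ:ℂ) * Complex.I) • T + Complex.exp (-((θ:ℂ) * Complex.I)) • S))} := by
      have hle := le_csSup hbdd1 (Set.mem_setOf.mpr ⟨(0:ℝ), rfl⟩)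
      refine le_trans ?_ hle
      exact opNormA_nonneg A _
    apply le_antisymm
    · unfold wA
      apply Real.sSup_le _ h0le
      rintro r ⟨x, hx, rfl⟩
      set z := innA A (T x) x with hz
      have hcself := selfadjRe hS' hT' (Complex.exp ((z.arg:ℂ) * Complex.I))
      have step1 : ‖z‖ = ‖innA A
          (((2:ℂ)⁻¹ • (Complex.exp ((z.arg:ℂ) * Complex.I) • T
            + (starRingEnd ℂ (Complex.exp ((z.arg:ℂ) * Complex.I))) • S)) x) x‖ := by
        rw [innA_ReOp hAsa hS' _ x, ← hz, choiceRe z]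
        rw [Complex.ofReal_re, Complex.norm_real, Real.norm_eq_abs]
        exact (_root_.abs_of_nonneg (norm_nonneg _)).symm
      rw [step1]
      calc ‖innA A (((2:ℂ)⁻¹ • (Complex.exp ((z.arg:ℂ) * Complex.I) • T
            + (starRingEnd ℂ (Complex.exp ((z.arg:ℂ) * Complex.I))) • S)) x) x‖
          ≤ wA A ((2:ℂ)⁻¹ • (Complex.exp ((z.arg:ℂ) * Complex.I) • T
            + (starRingEnd ℂ (Complex.exp ((z.arg:ℂ) * Complex.I))) • S)) := by
            unfold wA
            exact le_csSup (wA_bddAbove hQ hQ2 hcself) ⟨x, hx, rfl⟩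
        _ ≤ opNormA A ((2:ℂ)⁻¹ • (Complex.exp ((z.arg:ℂ) * Complex.I) • T
            + (starRingEnd ℂ (Complex.exp ((z.arg:ℂ) * Complex.I))) • S)) :=
            wA_le_opNormA hQ hQ2 hAsa hcself
        _ ≤ _ := le_csSup hbdd1 ⟨z.arg, by rw [hRform z.arg]⟩
    · exact Real.sSup_le (by rintro r ⟨θ, rfl⟩; exact hOple θ) (wA_nonneg A T)
  · -- imaginary part family
    have hRform : ∀ θ : ℝ,
        ((2 * Complex.I)⁻¹ • (Complex.exp ((θ:ℂ) * Complex.I) • T - Complex.exp (-((θ:ℂ) * Complex.I)) • S))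
          = ((2 * Complex.I)⁻¹ • (Complex.exp ((θ:ℂ) * Complex.I) • T
              - (starRingEnd ℂ (Complex.exp ((θ:ℂ) * Complex.I))) • S)) := fun θ => by
      rw [conj_exp_theta]
    have hOple : ∀ θ : ℝ, opNormA A ((2 * Complex.I)⁻¹ • (Complex.exp ((θ:ℂ) * Complex.I) • T
        - Complex.exp (-((θ:ℂ) * Complex.I)) • S)) ≤ wA A T := by
      intro θ
      rw [hRform θ]
      have h1 := opNormA_le_wA hQ hQ2 (selfadjIm hS' hT' (Complex.exp ((θ:ℂ) * Complex.I)))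
      have h2 : wA A ((2 * Complex.I)⁻¹ • (Complex.exp ((θ:ℂ) * Complex.I) • T
          - (starRingEnd ℂ (Complex.exp ((θ:ℂ) * Complex.I))) • S)) ≤ wA A T := by
        unfold wA
        apply Real.sSup_le _ (by exact wA_nonneg A T)
        rintro r ⟨x, hx, rfl⟩
        rw [innA_ImOp hAsa hS' _ x]
        calc ‖-(((starRingEnd ℂ (Complex.exp ((θ:ℂ) * Complex.I))
              * innA A (T x) x).im : ℝ) : ℂ)‖
            = |(starRingEnd ℂ (Complex.exp ((θ:ℂ) * Complex.I)) * innA A (T x) x).im| := by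
              rw [← Complex.ofReal_neg, Complex.norm_real, Real.norm_eq_abs, abs_neg]
          _ ≤ ‖starRingEnd ℂ (Complex.exp ((θ:ℂ) * Complex.I)) * innA A (T x) x‖ :=
              Complex.abs_im_le_norm _
          _ = ‖innA A (T x) x‖ := by
              rw [norm_mul, Complex.norm_conj, Complex.norm_exp_ofReal_mul_I, one_mul]
          _ ≤ wA A T := le_csSup hWbdd ⟨x, hx, rfl⟩
      linarith
    have hbdd1 : BddAbove {r : ℝ | ∃ θ : ℝ, r = opNormA A ((2 * Complex.I)⁻¹
        • (Complex.exp ((θ:ℂ) * Complex.I) • T - Complex.exp (-((θ:ℂ) * Complex.I)) • S))} := by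
      refine ⟨wA A T, ?_⟩
      rintro r ⟨θ, rfl⟩
      exact hOple θ
    have h0le : 0 ≤ sSup {r : ℝ | ∃ θ : ℝ, r = opNormA A ((2 * Complex.I)⁻¹
        • (Complex.exp ((θ:ℂ) * Complex.I) • T - Complex.exp (-((θ:ℂ) * Complex.I)) • S))} := by
      have hle := le_csSup hbdd1 (Set.mem_setOf.mpr ⟨(0:ℝ), rfl⟩)
      refine le_trans ?_ hle
      exact opNormA_nonneg A _
    apply le_antisymm
    · unfold wA
      apply Real.sSup_le _ h0le
      rintro r ⟨x, hx, rfl⟩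
      set z := innA A (T x) x with hz
      set θ0 : ℝ := z.arg + Real.pi / 2 with hθ0
      have hcself := selfadjIm hS' hT' (Complex.exp ((θ0:ℂ) * Complex.I))
      have him : (starRingEnd ℂ (Complex.exp ((θ0:ℂ) * Complex.I)) * z).im
          = -(‖z‖) := by
        have h := choiceIm z
        rw [hθ0]
        linarith
      have step1 : ‖z‖ = ‖innA A
          (((2 * Complex.I)⁻¹ • (Complex.exp ((θ0:ℂ) * Complex.I) • T
            - (starRingEnd ℂ (Complex.exp ((θ0:ℂ) * Complex.I))) • S)) x) x‖ := by
        rw [innA_ImOp hAsa hS' _ x, ← hz, him]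
        rw [Complex.ofReal_neg, neg_neg, Complex.norm_real, Real.norm_eq_abs]
        exact (_root_.abs_of_nonneg (norm_nonneg _)).symm
      rw [step1]
      calc ‖innA A (((2 * Complex.I)⁻¹ • (Complex.exp ((θ0:ℂ) * Complex.I) • T
            - (starRingEnd ℂ (Complex.exp ((θ0:ℂ) * Complex.I))) • S)) x) x‖
          ≤ wA A ((2 * Complex.I)⁻¹ • (Complex.exp ((θ0:ℂ) * Complex.I) • T
            - (starRingEnd ℂ (Complex.exp ((θ0:ℂ) * Complex.I))) • S)) := by
            unfold wA
            exact le_csSup (wA_bddAbove hQ hQ2 hcself) ⟨x, hx, rfl⟩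
        _ ≤ opNormA A ((2 * Complex.I)⁻¹ • (Complex.exp ((θ0:ℂ) * Complex.I) • T
            - (starRingEnd ℂ (Complex.exp ((θ0:ℂ) * Complex.I))) • S)) :=
            wA_le_opNormA hQ hQ2 hAsa hcself
        _ ≤ _ := le_csSup hbdd1 ⟨θ0, by rw [hRform θ0]⟩
    · exact Real.sSup_le (by rintro r ⟨θ, rfl⟩; exact hOple θ) (wA_nonneg A T)
end
end

section
/- Let A be a positive operator on H, B = diag(A,A) on H ⊕ H, and X, Y ∈ B_A(H). Then the B-numerical radius of the diagonal operator matrix diag(X,Y) equals max{w_A(X), w_A(Y)}. -/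
noncomputable section
open Complex ContinuousLinearMap

variable {H : Type*} [NormedAddCommGroup H] [InnerProductSpace ℂ H] [CompleteSpace H]

private lemma symmA (A : H →L[ℂ] H) (hA : A.IsPositive) (u v : H) :
    (inner ℂ (A u) v : ℂ) = inner ℂ u (A v) := by
  have h := isSelfAdjoint_iff'.mp hA.isSelfAdjoint
  conv_rhs => rw [← h, adjoint_inner_right]

private def coreA (A : H →L[ℂ] H) (hA : A.IsPositive) : PreInnerProductSpace.Core ℂ H where
  inner x y := inner ℂ (A x) y
  conj_inner_symm x y := by
    rw [symmA A hA y x, inner_conj_symm]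
  re_inner_nonneg x := by simpa using (Complex.nonneg_iff.mp (hA.inner_nonneg_left x)).1
  add_left x y z := by simp [inner_add_left]
  smul_left x y r := by simp [inner_smul_left, mul_comm]

private lemma csA (A : H →L[ℂ] H) (hA : A.IsPositive) (u v : H) :
    ‖(inner ℂ (A u) v : ℂ)‖ ^ 2
      ≤ (inner ℂ (A u) u : ℂ).re * (inner ℂ (A v) v : ℂ).re := by
  have h := @InnerProductSpace.Core.inner_mul_inner_self_le ℂ H _ _ _ (coreA A hA) u v
  change ‖(inner ℂ (A u) v : ℂ)‖ * ‖(inner ℂ (A v) u : ℂ)‖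
      ≤ RCLike.re (inner ℂ (A u) u : ℂ) * RCLike.re (inner ℂ (A v) v : ℂ) at h
  have e : ‖(inner ℂ (A v) u : ℂ)‖ = ‖(inner ℂ (A u) v : ℂ)‖ := by
    rw [symmA A hA u v, ← inner_conj_symm]
    exact RCLike.norm_conj _
  rw [e] at h
  simpa [sq] using h

private lemma keyA (A D : H →L[ℂ] H) (hA : A.IsPositive)
    (hD : A ∘L D = (ContinuousLinearMap.adjoint D) ∘L A) (x : H) :
    ‖(inner ℂ (A (D x)) x : ℂ)‖ ≤ ‖D‖ * (inner ℂ (A x) x : ℂ).re := by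
  have hDpt : ∀ y, A (D y) = (ContinuousLinearMap.adjoint D) (A y) := fun y => by
    have := DFunLike.congr_fun hD y
    simpa using this
  have powpt : ∀ (m : ℕ) (y : H),
      A ((D ^ m) y) = (((ContinuousLinearMap.adjoint D)) ^ m) (A y) := by
    intro m
    induction m with
    | zero => intro y; simp
    | succ n ih =>
      intro y
      simp only [pow_succ', mul_apply_eq_comp]
      rw [hDpt, ih]
  have hadj : ∀ m : ℕ, ContinuousLinearMap.adjoint (D ^ m)
      = (ContinuousLinearMap.adjoint D) ^ m := fun m => by
    rw [← star_eq_adjoint, ← star_eq_adjoint, star_pow]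
  set a := (inner ℂ (A x) x : ℂ).re with ha
  have ha0 : 0 ≤ a := by simpa [ha] using (Complex.nonneg_iff.mp (hA.inner_nonneg_left x)).1
  set r : ℕ → ℝ := fun m => ‖(inner ℂ (A ((D ^ m) x)) x : ℂ)‖ with hr
  have hr0 : ∀ m, 0 ≤ r m := fun m => norm_nonneg _
  have hstep : ∀ m, r m ^ 2 ≤ r (2 * m) * a := by
    intro m
    have h1 := csA A hA ((D ^ m) x) x
    have e1 : (inner ℂ (A ((D ^ m) x)) ((D ^ m) x) : ℂ)
        = inner ℂ (A x) ((D ^ (2 * m)) x) := by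
      rw [powpt m x, ← hadj m, adjoint_inner_left]
      congr 1
      rw [two_mul, pow_add, mul_apply_eq_comp]
    have e2 : (inner ℂ (A x) ((D ^ (2 * m)) x) : ℂ).re ≤ r (2 * m) := by
      have e3 : (inner ℂ (A x) ((D ^ (2 * m)) x) : ℂ)
          = (starRingEnd ℂ) (inner ℂ (A ((D ^ (2 * m)) x)) x : ℂ) := by
        rw [symmA A hA, inner_conj_symm]
      calc (inner ℂ (A x) ((D ^ (2 * m)) x) : ℂ).re
          ≤ ‖(inner ℂ (A x) ((D ^ (2 * m)) x) : ℂ)‖ := Complex.re_le_norm _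
        _ = r (2 * m) := by rw [e3, Complex.norm_conj]
    calc r m ^ 2 ≤ (inner ℂ (A ((D ^ m) x)) ((D ^ m) x) : ℂ).re * a := h1
      _ = (inner ℂ (A x) ((D ^ (2 * m)) x) : ℂ).re * a := by rw [e1]
      _ ≤ r (2 * m) * a := mul_le_mul_of_nonneg_right e2 ha0
  have hDm : ∀ (m : ℕ) (y : H), ‖(D ^ m) y‖ ≤ ‖D‖ ^ m * ‖y‖ := by
    intro m
    induction m with
    | zero => intro y; simp
    | succ n ih =>
      intro y
      rw [pow_succ, mul_apply_eq_comp]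
      calc ‖(D ^ n) (D y)‖ ≤ ‖D‖ ^ n * ‖D y‖ := ih (D y)
        _ ≤ ‖D‖ ^ n * (‖D‖ * ‖y‖) := by
            have := D.le_opNorm y
            have hn : (0:ℝ) ≤ ‖D‖ ^ n := by positivity
            nlinarith
        _ = ‖D‖ ^ (n + 1) * ‖y‖ := by ring
  set C := ‖A‖ * (‖x‖ * ‖x‖) with hC
  have hbound : ∀ m, r m ≤ C * ‖D‖ ^ m := by
    intro m
    calc r m = ‖(inner ℂ (A ((D ^ m) x)) x : ℂ)‖ := rfl
      _ ≤ ‖A ((D ^ m) x)‖ * ‖x‖ := norm_inner_le_norm _ _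
      _ ≤ (‖A‖ * ‖(D ^ m) x‖) * ‖x‖ := by
          gcongr
          exact A.le_opNorm ((D ^ m) x)
      _ ≤ (‖A‖ * (‖D‖ ^ m * ‖x‖)) * ‖x‖ := by
          gcongr
          exact hDm m x
      _ = C * ‖D‖ ^ m := by rw [hC]; ring
  -- conclude
  have goal_eq : ‖(inner ℂ (A (D x)) x : ℂ)‖ = r 1 := by simp [hr]
  rw [goal_eq]
  by_cases haz : a = 0
  · have h1 := hstep 1
    rw [haz, mul_zero] at h1
    have h2 : r 1 = 0 := by nlinarith [hr0 1]
    rw [haz, h2, mul_zero]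
  · have hapos : 0 < a := ha0.lt_of_ne (Ne.symm haz)
    by_contra hcon
    push_neg at hcon
    have hD0 : 0 < ‖D‖ := by
      rcases (norm_nonneg D).eq_or_lt with h | h
      · exfalso
        have hz : D = 0 := by
          rw [eq_comm, norm_eq_zero] at h; exact h
        have hr1 : r 1 = 0 := by
          have e : r 1 = ‖(inner ℂ (A (D x)) x : ℂ)‖ := by simp [hr]
          rw [e, hz]; simp
        rw [← h, hr1] at hcon
        simp at hcon
      · exact h
    have claim : ∀ n : ℕ, (r 1 / a) ^ (2 ^ n) ≤ r (2 ^ n) / a := by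
      intro n
      induction n with
      | zero => simp
      | succ n ih =>
        have hnn : (0:ℝ) ≤ (r 1 / a) ^ (2 ^ n) := by positivity
        calc (r 1 / a) ^ (2 ^ (n + 1)) = ((r 1 / a) ^ (2 ^ n)) ^ 2 := by
              rw [← pow_mul, pow_succ]
          _ ≤ (r (2 ^ n) / a) ^ 2 := pow_le_pow_left₀ hnn ih 2
          _ = r (2 ^ n) ^ 2 / a ^ 2 := div_pow _ _ _
          _ ≤ (r (2 ^ (n + 1)) * a) / a ^ 2 := by
              have h5 := hstep (2 ^ n)
              rw [show 2 * 2 ^ n = 2 ^ (n + 1) by ring] at h5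
              gcongr
          _ = r (2 ^ (n + 1)) / a := by
              rw [sq]
              rw [mul_comm (r (2 ^ (n + 1))) a, mul_div_mul_left _ _ hapos.ne']
    set q := r 1 / (a * ‖D‖) with hq'
    have hq : 1 < q := by
      rw [hq', lt_div_iff₀ (by positivity)]
      nlinarith [hcon]
    obtain ⟨n, hn⟩ := pow_unbounded_of_one_lt (C / a) hq
    have h1 : q ^ n ≤ q ^ (2 ^ n) := pow_le_pow_right₀ hq.le (Nat.lt_two_pow_self (n := n)).le
    have h2 : q ^ (2 ^ n) ≤ C / a := by
      have e : q ^ (2 ^ n) = (r 1 / a) ^ (2 ^ n) / ‖D‖ ^ (2 ^ n) := by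
        rw [hq', div_pow, mul_pow, div_pow, div_div]
      rw [e]
      have h3 := claim n
      have h4 := hbound (2 ^ n)
      calc (r 1 / a) ^ (2 ^ n) / ‖D‖ ^ (2 ^ n) ≤ (r (2 ^ n) / a) / ‖D‖ ^ (2 ^ n) := by gcongr
        _ ≤ ((C * ‖D‖ ^ (2 ^ n)) / a) / ‖D‖ ^ (2 ^ n) := by gcongr
        _ = C / a := by
            rw [div_div, mul_comm a (‖D‖ ^ (2 ^ n)), ← div_div,
              mul_div_assoc, div_self (by positivity : (‖D‖:ℝ) ^ (2 ^ n) ≠ 0), mul_one]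
    linarith [hn, h1, h2]

private lemma boundA (A X S : H →L[ℂ] H) (hA : A.IsPositive) (hS : IsAAdjoint A X S) (x : H) :
    ‖innA A (X x) x‖ ≤ Real.sqrt ‖S ∘L X‖ * (innA A x x).re := by
  have hsa : ContinuousLinearMap.adjoint A = A := isSelfAdjoint_iff'.mp hA.isSelfAdjoint
  have hS' : A ∘L S = ContinuousLinearMap.adjoint X ∘L A := hS
  have hX' : A ∘L X = ContinuousLinearMap.adjoint S ∘L A := by
    have h : ContinuousLinearMap.adjoint (A ∘L S)
        = ContinuousLinearMap.adjoint (ContinuousLinearMap.adjoint X ∘L A) := by rw [hS']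
    rw [adjoint_comp, adjoint_comp, adjoint_adjoint, hsa] at h
    exact h.symm
  have hD : A ∘L (S ∘L X) = ContinuousLinearMap.adjoint (S ∘L X) ∘L A := by
    ext y
    rw [adjoint_comp]
    simp only [comp_apply]
    have h1 := DFunLike.congr_fun hS' (X y)
    have h2 := DFunLike.congr_fun hX' y
    simp only [comp_apply] at h1 h2
    rw [h1, h2]
  have hkey := keyA A (S ∘L X) hA hD x
  have ha0 : 0 ≤ (innA A x x).re := by simpa [innA] using (Complex.nonneg_iff.mp (hA.inner_nonneg_left x)).1
  have hid : (inner ℂ (A ((S ∘L X) x)) x : ℂ) = inner ℂ (A (X x)) (X x) := by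
    have h1 := DFunLike.congr_fun hS' (X x)
    simp only [comp_apply] at h1
    simp only [comp_apply]
    rw [h1, adjoint_inner_left]
  have h2 : (inner ℂ (A (X x)) (X x) : ℂ).re ≤ ‖S ∘L X‖ * (innA A x x).re := by
    calc (inner ℂ (A (X x)) (X x) : ℂ).re
        ≤ ‖(inner ℂ (A (X x)) (X x) : ℂ)‖ := Complex.re_le_norm _
      _ = ‖(inner ℂ (A ((S ∘L X) x)) x : ℂ)‖ := by rw [hid]
      _ ≤ ‖S ∘L X‖ * (innA A x x).re := hkey
  have hcs := csA A hA (X x) x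
  have habs : ‖innA A (X x) x‖ ^ 2 ≤ (Real.sqrt ‖S ∘L X‖ * (innA A x x).re) ^ 2 := by
    have e : (Real.sqrt ‖S ∘L X‖ * (innA A x x).re) ^ 2
        = ‖S ∘L X‖ * (innA A x x).re * (innA A x x).re := by
      rw [mul_pow, Real.sq_sqrt (norm_nonneg _)]; ring
    rw [e]
    calc ‖innA A (X x) x‖ ^ 2
        ≤ (inner ℂ (A (X x)) (X x) : ℂ).re * (innA A x x).re := hcs
      _ ≤ ‖S ∘L X‖ * (innA A x x).re * (innA A x x).re :=
          mul_le_mul_of_nonneg_right h2 ha0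
  have := Real.sqrt_le_sqrt habs
  rwa [Real.sqrt_sq (norm_nonneg _), Real.sqrt_sq (by positivity)] at this

private lemma innA_smul (A T : H →L[ℂ] H) (t : ℝ) (u : H) :
    innA A (T ((t : ℂ) • u)) ((t : ℂ) • u) = ((t ^ 2 : ℝ) : ℂ) * innA A (T u) u := by
  simp only [innA, map_smul, inner_smul_left, inner_smul_right, Complex.conj_ofReal]
  push_cast
  ring

private lemma innA_self_smul (A : H →L[ℂ] H) (t : ℝ) (u : H) :
    (innA A ((t : ℂ) • u) ((t : ℂ) • u)).re = t ^ 2 * (innA A u u).re := by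
  have := innA_smul A 1 t u
  simp only [one_apply_eq_self] at this
  rw [this]
  simp [← Complex.ofReal_pow]

theorem stmt3 (A X Y : H →L[ℂ] H) (hA : A.IsPositive)
    (hX : ∃ S, IsAAdjoint A X S) (hY : ∃ S, IsAAdjoint A Y S) :
    wB A (blk X 0 0 Y) = max (wA A X) (wA A Y) := by
  classical
  obtain ⟨Sx, hSx⟩ := hX
  obtain ⟨Sy, hSy⟩ := hY
  have hbX := boundA A X Sx hA hSx
  have hbY := boundA A Y Sy hA hSy
  have hre0 : ∀ x : H, 0 ≤ (innA A x x).re := fun x => by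
    simpa [innA] using (Complex.nonneg_iff.mp (hA.inner_nonneg_left x)).1
  have hblk : ∀ u : H × H, (blk X 0 0 Y) u = (X u.1, Y u.2) := by
    intro u
    simp [blk]
  have hval : ∀ u : H × H,
      inn2 (Bop A ((blk X 0 0 Y) u)) u = innA A (X u.1) u.1 + innA A (Y u.2) u.2 := by
    intro u
    rw [hblk]
    simp [inn2, Bop, innA]
  have hvB : ∀ u : H × H, (inn2 (Bop A u) u).re
      = (innA A u.1 u.1).re + (innA A u.2 u.2).re := by
    intro u
    simp [inn2, Bop, innA]
  by_cases hex : ∃ z : H, vnormA A z = 1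
  · obtain ⟨z, hz⟩ := hex
    have bddX : BddAbove {r : ℝ | ∃ x : H, vnormA A x = 1 ∧ r = ‖innA A (X x) x‖} := by
      refine ⟨Real.sqrt ‖Sx ∘L X‖, ?_⟩
      rintro r ⟨x, hx, rfl⟩
      have h := hbX x
      rw [Real.sqrt_eq_one.mp hx, mul_one] at h
      exact h
    have bddY : BddAbove {r : ℝ | ∃ x : H, vnormA A x = 1 ∧ r = ‖innA A (Y x) x‖} := by
      refine ⟨Real.sqrt ‖Sy ∘L Y‖, ?_⟩
      rintro r ⟨x, hx, rfl⟩
      have h := hbY x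
      rw [Real.sqrt_eq_one.mp hx, mul_one] at h
      exact h
    have hzX : ∀ u : H, (innA A u u).re = 0 → ‖innA A (X u) u‖ = 0 := by
      intro u h
      have h2 := hbX u
      rw [h, mul_zero] at h2
      exact le_antisymm h2 (norm_nonneg _)
    have hzY : ∀ u : H, (innA A u u).re = 0 → ‖innA A (Y u) u‖ = 0 := by
      intro u h
      have h2 := hbY u
      rw [h, mul_zero] at h2
      exact le_antisymm h2 (norm_nonneg _)
    have piece : ∀ (T : H →L[ℂ] H),
        BddAbove {r : ℝ | ∃ x : H, vnormA A x = 1 ∧ r = ‖innA A (T x) x‖} →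
        (∀ u : H, (innA A u u).re = 0 → ‖innA A (T u) u‖ = 0) →
        ∀ u : H, ‖innA A (T u) u‖ ≤ wA A T * (innA A u u).re := by
      intro T bT hzero u
      rcases (hre0 u).eq_or_lt with h0 | hpos
      · rw [← h0, mul_zero, hzero u h0.symm]
      · set s := (innA A u u).re with hs
        set t : ℝ := (Real.sqrt s)⁻¹ with ht
        have hsp : 0 < Real.sqrt s := Real.sqrt_pos.mpr hpos
        have ht2 : t ^ 2 = s⁻¹ := by rw [ht, inv_pow, Real.sq_sqrt hpos.le]
        have hunit' : vnormA A ((t : ℂ) • u) = 1 := by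
          unfold vnormA
          rw [innA_self_smul, ht2, ← hs, inv_mul_cancel₀ hpos.ne', Real.sqrt_one]
        have hmem : ‖innA A (T ((t : ℂ) • u)) ((t : ℂ) • u)‖ ∈
            {r : ℝ | ∃ x : H, vnormA A x = 1 ∧ r = ‖innA A (T x) x‖} :=
          ⟨_, hunit', rfl⟩
        have hle := le_csSup bT hmem
        rw [innA_smul, norm_mul, Complex.norm_real, Real.norm_eq_abs, _root_.abs_of_nonneg (sq_nonneg t), ht2] at hle
        calc ‖innA A (T u) u‖
            = s * (s⁻¹ * ‖innA A (T u) u‖) := by field_simp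
          _ ≤ s * wA A T := mul_le_mul_of_nonneg_left hle hpos.le
          _ = wA A T * s := mul_comm _ _
    have pX := piece X bddX hzX
    have pY := piece Y bddY hzY
    have wX0 : 0 ≤ wA A X :=
      le_trans (norm_nonneg _) (le_csSup bddX ⟨z, hz, rfl⟩)
    have hM0 : 0 ≤ max (wA A X) (wA A Y) := le_trans wX0 (le_max_left _ _)
    have hBle : ∀ r ∈ {r : ℝ | ∃ u : H × H, vnormB A u = 1 ∧
        r = ‖inn2 (Bop A ((blk X 0 0 Y) u)) u‖}, r ≤ max (wA A X) (wA A Y) := by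
      rintro r ⟨u, hu, rfl⟩
      have hu1 : (innA A u.1 u.1).re + (innA A u.2 u.2).re = 1 := by
        unfold vnormB at hu
        rw [← hvB u]
        exact Real.sqrt_eq_one.mp hu
      rw [hval u]
      calc ‖innA A (X u.1) u.1 + innA A (Y u.2) u.2‖
          ≤ ‖innA A (X u.1) u.1‖ + ‖innA A (Y u.2) u.2‖ :=
            norm_add_le _ _
        _ ≤ wA A X * (innA A u.1 u.1).re + wA A Y * (innA A u.2 u.2).re :=
            add_le_add (pX u.1) (pY u.2)
        _ ≤ max (wA A X) (wA A Y) * (innA A u.1 u.1).re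
              + max (wA A X) (wA A Y) * (innA A u.2 u.2).re :=
            add_le_add (mul_le_mul_of_nonneg_right (le_max_left _ _) (hre0 u.1))
              (mul_le_mul_of_nonneg_right (le_max_right _ _) (hre0 u.2))
        _ = max (wA A X) (wA A Y) := by rw [← mul_add, hu1, mul_one]
    have bddB : BddAbove {r : ℝ | ∃ u : H × H, vnormB A u = 1 ∧
        r = ‖inn2 (Bop A ((blk X 0 0 Y) u)) u‖} :=
      ⟨max (wA A X) (wA A Y), hBle⟩
    have membX : ∀ x : H, vnormA A x = 1 → ‖innA A (X x) x‖ ∈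
        {r : ℝ | ∃ u : H × H, vnormB A u = 1 ∧
          r = ‖inn2 (Bop A ((blk X 0 0 Y) u)) u‖} := by
      intro x hx
      refine ⟨(x, 0), ?_, ?_⟩
      · have e : (inn2 (Bop A ((x, (0:H)) : H × H)) (x, 0)).re = (innA A x x).re := by
          rw [hvB]
          simp [innA]
        unfold vnormB
        rw [e]
        exact hx
      · have e : inn2 (Bop A ((blk X 0 0 Y) ((x, (0:H)) : H × H))) (x, 0) = innA A (X x) x := by
          rw [hval]
          simp [innA]
        rw [e]
    have membY : ∀ y : H, vnormA A y = 1 → ‖innA A (Y y) y‖ ∈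
        {r : ℝ | ∃ u : H × H, vnormB A u = 1 ∧
          r = ‖inn2 (Bop A ((blk X 0 0 Y) u)) u‖} := by
      intro y hy
      refine ⟨(0, y), ?_, ?_⟩
      · have e : (inn2 (Bop A (((0:H), y) : H × H)) (0, y)).re = (innA A y y).re := by
          rw [hvB]
          simp [innA]
        unfold vnormB
        rw [e]
        exact hy
      · have e : inn2 (Bop A ((blk X 0 0 Y) (((0:H), y) : H × H))) (0, y) = innA A (Y y) y := by
          rw [hval]
          simp [innA]
        rw [e]
    have hwB0 : 0 ≤ wB A (blk X 0 0 Y) :=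
      le_trans (norm_nonneg _) (le_csSup bddB (membX z hz))
    apply le_antisymm
    · exact Real.sSup_le hBle hM0
    · apply max_le
      · refine Real.sSup_le ?_ hwB0
        rintro r ⟨x, hx, rfl⟩
        exact le_csSup bddB (membX x hx)
      · refine Real.sSup_le ?_ hwB0
        rintro r ⟨y, hy, rfl⟩
        exact le_csSup bddB (membY y hy)
  · have hall : ∀ x : H, (innA A x x).re = 0 := by
      intro x
      by_contra hne
      have hpos : 0 < (innA A x x).re := (hre0 x).lt_of_ne (Ne.symm hne)
      apply hex
      refine ⟨(((Real.sqrt (innA A x x).re)⁻¹ : ℝ) : ℂ) • x, ?_⟩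
      unfold vnormA
      rw [innA_self_smul, inv_pow, Real.sq_sqrt hpos.le, inv_mul_cancel₀ hpos.ne',
        Real.sqrt_one]
    unfold wB wA
    have eX : {r : ℝ | ∃ x : H, vnormA A x = 1 ∧ r = ‖innA A (X x) x‖} = ∅ := by
      ext r
      simp only [Set.mem_setOf_eq, Set.mem_empty_iff_false, iff_false, not_exists]
      rintro x ⟨hx1, -⟩
      unfold vnormA at hx1
      rw [hall x] at hx1
      simp at hx1
    have eY : {r : ℝ | ∃ x : H, vnormA A x = 1 ∧ r = ‖innA A (Y x) x‖} = ∅ := by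
      ext r
      simp only [Set.mem_setOf_eq, Set.mem_empty_iff_false, iff_false, not_exists]
      rintro x ⟨hx1, -⟩
      unfold vnormA at hx1
      rw [hall x] at hx1
      simp at hx1
    have eB : {r : ℝ | ∃ u : H × H, vnormB A u = 1 ∧
        r = ‖inn2 (Bop A ((blk X 0 0 Y) u)) u‖} = ∅ := by
      ext r
      simp only [Set.mem_setOf_eq, Set.mem_empty_iff_false, iff_false, not_exists]
      rintro u ⟨hu1, -⟩
      unfold vnormB at hu1
      rw [hvB u, hall u.1, hall u.2] at hu1
      simp at hu1
    rw [eX, eY, eB, Real.sSup_empty]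
    simp
end
end

section
/- Let A be a strictly positive operator on H, B = diag(A,A), and X, Y ∈ B_A(H). Then w_B of the anti-diagonal operator matrix [[0,X],[Y,0]] equals w_B of [[0,Y],[X,0]]. -/
noncomputable section
open Complex ContinuousLinearMap

variable {H : Type*} [NormedAddCommGroup H] [InnerProductSpace ℂ H] [CompleteSpace H]

theorem stmt4 (A X Y : H →L[ℂ] H) (hA : StrictPos A)
    (hX : ∃ S, IsAAdjoint A X S) (hY : ∃ S, IsAAdjoint A Y S) :
    wB A (blk 0 X Y 0) = wB A (blk 0 Y X 0) := by
  unfold wB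
  congr 1
  ext r
  constructor
  · rintro ⟨⟨x, y⟩, h1, h2⟩
    refine ⟨(y, x), ?_, ?_⟩
    · rw [← h1]; simp [vnormB, inn2, Bop]; ring_nf
    · rw [h2]; simp [inn2, Bop, blk]; ring_nf
  · rintro ⟨⟨x, y⟩, h1, h2⟩
    refine ⟨(y, x), ?_, ?_⟩
    · rw [← h1]; simp [vnormB, inn2, Bop]; ring_nf
    · rw [h2]; simp [inn2, Bop, blk]; ring_nf
end
end

section
/- Let A be a strictly positive operator on H, B = diag(A,A), X, Y ∈ B_A(H), and θ ∈ ℝ. Then w_B([[0, X],[e^{iθ}Y, 0]]) = w_B([[0, X],[Y, 0]]). -/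
noncomputable section
open Complex ContinuousLinearMap

variable {H : Type*} [NormedAddCommGroup H] [InnerProductSpace ℂ H] [CompleteSpace H]

theorem stmt5 (A X Y : H →L[ℂ] H) (hA : StrictPos A)
    (hX : ∃ S, IsAAdjoint A X S) (hY : ∃ S, IsAAdjoint A Y S) (θ : ℝ) :
    wB A (blk 0 X (Complex.exp ((θ : ℝ) * Complex.I) • Y) 0) = wB A (blk 0 X Y 0) := by
  set c : ℂ := Complex.exp ((θ : ℝ) * Complex.I) with hc
  set l : ℂ := Complex.exp (((θ/2 : ℝ) : ℂ) * Complex.I) with hl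
  have hll : l * l = c := by
    rw [hl, hc, ← Complex.exp_add]
    norm_num
    ring_nf
  have habsl : ‖l‖ = 1 := by rw [hl]; exact Complex.norm_exp_ofReal_mul_I _
  have hconj : (starRingEnd ℂ) l * l = 1 := by
    rw [mul_comm, Complex.mul_conj]
    simp [Complex.normSq_eq_norm_sq, habsl]
  have hcconj : (starRingEnd ℂ) c = (starRingEnd ℂ) l * (starRingEnd ℂ) l := by
    rw [← hll, map_mul]
  have hlne : l ≠ 0 := Complex.exp_ne_zero _
  have hblk : ∀ (Z : H →L[ℂ] H) (u : H × H),
      (blk 0 X Z 0 : H × H →L[ℂ] H × H) u = (X u.2, Z u.1) := by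
    intro Z u
    simp [blk, ContinuousLinearMap.prod_apply]
  have hB : ∀ u : H × H, Bop A u = (A u.1, A u.2) := fun u => rfl
  have key : ∀ a b : H,
      vnormB A (a, l • b) = vnormB A (a, b) ∧
      ‖inn2 (Bop A ((blk 0 X (c • Y) 0 : H × H →L[ℂ] H × H) (a, l • b))) (a, l • b)‖
        = ‖inn2 (Bop A ((blk 0 X Y 0 : H × H →L[ℂ] H × H) (a, b))) (a, b)‖ := by
    intro a b
    have e2 : inn2 (Bop A (a, l • b)) (a, l • b) = inn2 (Bop A (a, b)) (a, b) := by
      simp only [hB, inn2, map_smul, inner_smul_left, inner_smul_right]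
      linear_combination (inner ℂ (A b) b : ℂ) * hconj
    have e1 : inn2 (Bop A ((blk 0 X (c • Y) 0 : H × H →L[ℂ] H × H) (a, l • b))) (a, l • b)
        = (starRingEnd ℂ) l * inn2 (Bop A ((blk 0 X Y 0 : H × H →L[ℂ] H × H) (a, b))) (a, b) := by
      rw [hblk, hblk]
      simp only [hB, inn2, ContinuousLinearMap.smul_apply, map_smul, inner_smul_left,
        inner_smul_right, hcconj]
      linear_combination ((starRingEnd ℂ) l * (inner ℂ (A (Y a)) b : ℂ)) * hconj
    refine ⟨?_, ?_⟩
    · unfold vnormB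
      rw [e2]
    · rw [e1, norm_mul, Complex.norm_conj, habsl, one_mul]
  have hsets : {r : ℝ | ∃ u : H × H, vnormB A u = 1 ∧
        r = ‖inn2 (Bop A ((blk 0 X (c • Y) 0 : H × H →L[ℂ] H × H) u)) u‖}
      = {r : ℝ | ∃ u : H × H, vnormB A u = 1 ∧
        r = ‖inn2 (Bop A ((blk 0 X Y 0 : H × H →L[ℂ] H × H) u)) u‖} := by
    ext r
    simp only [Set.mem_setOf_eq]
    constructor
    · rintro ⟨⟨a, b⟩, hu, rfl⟩
      have hb : l • (l⁻¹ • b) = b := by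
        rw [smul_smul, mul_inv_cancel₀ hlne, one_smul]
      have h := key a (l⁻¹ • b)
      rw [hb] at h
      exact ⟨(a, l⁻¹ • b), by rw [← h.1]; exact hu, h.2⟩
    · rintro ⟨⟨a, b⟩, hu, rfl⟩
      exact ⟨(a, l • b), by rw [(key a b).1]; exact hu, ((key a b).2).symm⟩
  unfold wB
  rw [hsets]
end
end

section
/- Let A be a positive operator on H, B = diag(A,A), and X, Y ∈ B_A(H). Then w_B([[0,X],[Y,0]])² ≥ (1/4)·max{‖XX^{♯A} + Y^{♯A}Y‖_A, ‖X^{♯A}X + YY^{♯A}‖_A}. -/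
noncomputable section
open Complex ContinuousLinearMap

variable {H : Type*} [NormedAddCommGroup H] [InnerProductSpace ℂ H] [CompleteSpace H]

section Abstract
variable {E : Type*} [NormedAddCommGroup E] [InnerProductSpace ℂ E]

local notation "⟪" x ", " y "⟫" => @inner ℂ _ _ x y

def myPn (M : E →L[ℂ] E) (u : E) : ℝ := Real.sqrt (⟪M u, u⟫).re

variable {M : E →L[ℂ] E}

lemma myPn_nonneg (u : E) : 0 ≤ myPn M u := Real.sqrt_nonneg _

lemma myPn_sq (hpos : ∀ u : E, 0 ≤ (⟪M u, u⟫).re) (u : E) :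
    myPn M u ^ 2 = (⟪M u, u⟫).re := Real.sq_sqrt (hpos u)

lemma myCS (hherm : ∀ u v : E, ⟪M u, v⟫ = (starRingEnd ℂ) ⟪M v, u⟫)
    (hpos : ∀ u : E, 0 ≤ (⟪M u, u⟫).re) (u v : E) :
    ‖⟪M u, v⟫‖ ≤ myPn M u * myPn M v := by
  by_cases hc : ⟪M u, v⟫ = 0
  · rw [hc]; simp only [norm_zero]
    exact mul_nonneg (myPn_nonneg u) (myPn_nonneg v)
  · set c : ℂ := ⟪M u, v⟫ with hcdef
    set α : ℂ := c / (‖c‖ : ℂ) with hα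
    have habsc : (0:ℝ) < ‖c‖ := by
      simpa using (norm_pos_iff.mpr hc)
    have h1 : ⟪M (α • u), α • u⟫ = ⟪M u, u⟫ := by
      rw [map_smul, inner_smul_left, inner_smul_right]
      rw [← mul_assoc, ← Complex.normSq_eq_conj_mul_self]
      have : Complex.normSq α = 1 := by
        have : ‖α‖ = 1 := by
          rw [hα, norm_div, Complex.norm_real, Real.norm_eq_abs, abs_of_pos habsc, div_self habsc.ne']
        rw [← Complex.sq_norm, this]; norm_num
      rw [this]; simp
    have hcne : ((‖c‖ : ℝ) : ℂ) ≠ 0 := by exact_mod_cast habsc.ne'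
    have hcc : (starRingEnd ℂ) c * c = ((‖c‖ : ℝ) : ℂ) ^ 2 := by
      rw [mul_comm, Complex.mul_conj, ← Complex.sq_norm]; push_cast; ring
    have h2 : ⟪M (α • u), v⟫ = (‖c‖ : ℂ) := by
      rw [map_smul, inner_smul_left, hα, map_div₀, ← hcdef, Complex.conj_ofReal,
        div_mul_eq_mul_div, hcc]
      rw [sq, mul_div_assoc, div_self hcne, mul_one]
    have h3 : ⟪M v, α • u⟫ = (‖c‖ : ℂ) := by
      rw [inner_smul_right, hherm v u, ← hcdef, hα, div_mul_eq_mul_div,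
        Complex.mul_conj, ← Complex.sq_norm]
      push_cast
      rw [sq, mul_div_assoc, div_self hcne, mul_one]
    have key : ∀ t : ℝ, 0 ≤ (⟪M u, u⟫).re * (t * t) + (2 * ‖c‖) * t
        + (⟪M v, v⟫).re := by
      intro t
      have h0 := hpos ((t : ℂ) • (α • u) + v)
      have hexp0 : ∀ (w z : E) (t : ℝ), ⟪M ((t:ℂ) • w + z), (t:ℂ) • w + z⟫
          = ((t*t : ℝ) : ℂ) * ⟪M w, w⟫ + ((t:ℝ) : ℂ) * ⟪M w, z⟫
            + ((t:ℝ) : ℂ) * ⟪M z, w⟫ + ⟪M z, z⟫ := by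
        intro w z t
        simp only [map_add, map_smul, inner_add_left, inner_add_right,
          inner_smul_left, inner_smul_right, Complex.conj_ofReal]
        push_cast; ring
      have hexp : ⟪M ((t:ℂ) • (α • u) + v), (t:ℂ) • (α • u) + v⟫
          = ((t*t : ℝ) : ℂ) * ⟪M u, u⟫ + ((2 * t * ‖c‖ : ℝ) : ℂ)
            + ⟪M v, v⟫ := by
        rw [hexp0 (α • u) v t, h1, h2, h3]
        push_cast; ring
      rw [hexp] at h0
      simp only [Complex.add_re, Complex.ofReal_re, Complex.re_ofReal_mul] at h0
      nlinarith [h0]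
    have hd := discrim_le_zero key
    rw [discrim] at hd
    have habs2 : ‖c‖ ^ 2 ≤ (⟪M u, u⟫).re * (⟪M v, v⟫).re := by nlinarith
    calc ‖c‖ = Real.sqrt (‖c‖ ^ 2) :=
          (Real.sqrt_sq (norm_nonneg c)).symm
      _ ≤ Real.sqrt ((⟪M u, u⟫).re * (⟪M v, v⟫).re) := Real.sqrt_le_sqrt habs2
      _ = myPn M u * myPn M v := by
          rw [myPn, myPn, ← Real.sqrt_mul (hpos u)]

lemma myRe_le (hherm : ∀ u v : E, ⟪M u, v⟫ = (starRingEnd ℂ) ⟪M v, u⟫)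
    (hpos : ∀ u : E, 0 ≤ (⟪M u, u⟫).re) (u v : E) :
    (⟪M u, v⟫).re ≤ myPn M u * myPn M v :=
  (Complex.re_le_norm _).trans (myCS hherm hpos u v)

lemma myPn_smul (c : ℂ) (u : E) : myPn M (c • u) = ‖c‖ * myPn M u := by
  unfold myPn
  rw [map_smul, inner_smul_left, inner_smul_right, ← mul_assoc,
    ← Complex.normSq_eq_conj_mul_self]
  have : ((Complex.normSq c : ℝ) : ℂ) * ⟪M u, u⟫ = ((Complex.normSq c : ℝ) : ℂ) * ⟪M u, u⟫ := rfl
  rw [show (Complex.normSq c : ℂ) * ⟪M u, u⟫ = ((Complex.normSq c : ℝ) : ℂ) * ⟪M u, u⟫ from rfl,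
    Complex.re_ofReal_mul, ← Complex.sq_norm,
    Real.sqrt_mul (by positivity), Real.sqrt_sq (norm_nonneg c)]

lemma myPar (hherm : ∀ u v : E, ⟪M u, v⟫ = (starRingEnd ℂ) ⟪M v, u⟫)
    (hpos : ∀ u : E, 0 ≤ (⟪M u, u⟫).re) (u v : E) :
    myPn M (u + v) ^ 2 + myPn M (u - v) ^ 2 = 2 * myPn M u ^ 2 + 2 * myPn M v ^ 2 := by
  rw [myPn_sq hpos, myPn_sq hpos, myPn_sq hpos, myPn_sq hpos]
  have h1 : ⟪M (u + v), u + v⟫ = ⟪M u, u⟫ + ⟪M u, v⟫ + ⟪M v, u⟫ + ⟪M v, v⟫ := by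
    simp only [map_add, inner_add_left, inner_add_right]; ring
  have h2 : ⟪M (u - v), u - v⟫ = ⟪M u, u⟫ - ⟪M u, v⟫ - ⟪M v, u⟫ + ⟪M v, v⟫ := by
    simp only [map_sub, inner_sub_left, inner_sub_right]; ring
  rw [h1, h2]
  simp only [Complex.add_re, Complex.sub_re]
  ring

lemma myDual (hpos : ∀ u : E, 0 ≤ (⟪M u, u⟫).re) {z : E} (hz : myPn M z ≠ 0) :
    ∃ y : E, myPn M y = 1 ∧ myPn M z = (⟪M z, y⟫).re := by
  have hzpos : 0 < myPn M z := lt_of_le_of_ne (myPn_nonneg z) (Ne.symm hz)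
  refine ⟨(((myPn M z)⁻¹ : ℝ) : ℂ) • z, ?_, ?_⟩
  · rw [myPn_smul, Complex.norm_real, Real.norm_eq_abs, abs_of_pos (by positivity), inv_mul_cancel₀ hz]
  · rw [inner_smul_right]
    rw [Complex.re_ofReal_mul, ← myPn_sq hpos]
    field_simp

lemma myBound (hherm : ∀ u v : E, ⟪M u, v⟫ = (starRingEnd ℂ) ⟪M v, u⟫)
    (hpos : ∀ u : E, 0 ≤ (⟪M u, u⟫).re) {C C' : E →L[ℂ] E}
    (h : ∀ u v : E, ⟪M (C' u), v⟫ = ⟪M u, C v⟫) {v : E} (hv : myPn M v ≤ 1) :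
    myPn M (C v) ^ 2 ≤ 2 * ‖C'.comp C‖ := by
  have h' : ∀ u w : E, ⟪M (C u), w⟫ = ⟪M u, C' w⟫ := by
    intro u w
    rw [hherm (C u) w, ← h w u, ← hherm u (C' w)]
  set S := C'.comp C with hSdef
  have hS : ∀ u w : E, ⟪M (S u), w⟫ = ⟪M u, S w⟫ := by
    intro u w
    rw [hSdef]
    simp only [ContinuousLinearMap.comp_apply]
    rw [h (C u) w, h' u (C w)]
  have hSn : ∀ (n : ℕ) (u w : E), ⟪M ((S ^ n) u), w⟫ = ⟪M u, (S ^ n) w⟫ := by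
    intro n
    induction n with
    | zero => intro u w; simp
    | succ k ih =>
      intro u w
      rw [pow_succ, ContinuousLinearMap.mul_apply, ContinuousLinearMap.mul_apply,
        ih (S u) w, hS u ((S ^ k) w)]
      congr 1
      rw [← ContinuousLinearMap.mul_apply, ← ContinuousLinearMap.mul_apply,
        ← pow_succ', ← pow_succ]
  set b : ℕ → ℝ := fun k => myPn M ((S ^ (2 ^ k)) v) with hbdef
  have hb0 : myPn M (C v) ^ 2 ≤ b 0 := by
    rw [myPn_sq hpos, hbdef]
    have : ⟪M (C v), C v⟫ = ⟪M v, (S ^ (2 ^ 0)) v⟫ := by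
      rw [h' v (C v)]
      norm_num
      rfl
    rw [this]
    calc (⟪M v, (S ^ (2^0)) v⟫).re ≤ myPn M v * myPn M ((S ^ (2^0)) v) :=
          myRe_le hherm hpos _ _
      _ ≤ 1 * myPn M ((S ^ (2^0)) v) := by
          exact mul_le_mul_of_nonneg_right hv (myPn_nonneg _)
      _ = b 0 := by rw [one_mul]
  have hbk : ∀ k, b k ^ 2 ≤ b (k + 1) := by
    intro k
    rw [hbdef]
    simp only
    rw [myPn_sq hpos]
    have : ⟪M ((S ^ (2^k)) v), (S ^ (2^k)) v⟫ = ⟪M v, (S ^ (2^(k+1))) v⟫ := by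
      rw [hSn (2^k) v ((S ^ (2^k)) v)]
      congr 1
      rw [show (2:ℕ)^(k+1) = 2^k + 2^k by ring, pow_add, ContinuousLinearMap.mul_apply]
    rw [this]
    calc (⟪M v, (S ^ (2^(k+1))) v⟫).re ≤ myPn M v * myPn M ((S ^ (2^(k+1))) v) :=
          myRe_le hherm hpos _ _
      _ ≤ 1 * myPn M ((S ^ (2^(k+1))) v) := mul_le_mul_of_nonneg_right hv (myPn_nonneg _)
      _ = b (k+1) := one_mul _
  have hmain : ∀ k, b 0 ^ (2 ^ k) ≤ b k := by
    intro k
    induction k with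
    | zero => simp
    | succ k ih =>
      calc b 0 ^ (2 ^ (k+1)) = (b 0 ^ (2 ^ k)) ^ 2 := by
            rw [← pow_mul]; ring_nf
        _ ≤ (b k) ^ 2 := by
            apply pow_le_pow_left₀ (pow_nonneg (myPn_nonneg _) _) ih
        _ ≤ b (k+1) := hbk k
  have hgrow : ∀ k, b k ^ 2 ≤ (‖M‖ * ‖v‖ ^ 2) * ‖S‖ ^ (2 ^ (k+1)) := by
    intro k
    rw [hbdef]
    simp only
    rw [myPn_sq hpos]
    have : ⟪M ((S ^ (2^k)) v), (S ^ (2^k)) v⟫ = ⟪M v, (S ^ (2^(k+1))) v⟫ := by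
      rw [hSn (2^k) v ((S ^ (2^k)) v)]
      congr 1
      rw [show (2:ℕ)^(k+1) = 2^k + 2^k by ring, pow_add, ContinuousLinearMap.mul_apply]
    rw [this]
    calc (⟪M v, (S ^ (2^(k+1))) v⟫).re ≤ ‖(⟪M v, (S ^ (2^(k+1))) v⟫ : ℂ)‖ :=
          Complex.re_le_norm _
      _ ≤ ‖M v‖ * ‖(S ^ (2^(k+1))) v‖ := norm_inner_le_norm _ _
      _ ≤ (‖M‖ * ‖v‖) * (‖S ^ (2^(k+1))‖ * ‖v‖) := by
          apply mul_le_mul (M.le_opNorm v) ((S ^ (2^(k+1))).le_opNorm v)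
            (norm_nonneg _) (by positivity)
      _ ≤ (‖M‖ * ‖v‖) * (‖S‖ ^ (2^(k+1)) * ‖v‖) := by
          have := norm_pow_le' S (n := 2^(k+1)) (by positivity)
          apply mul_le_mul_of_nonneg_left (mul_le_mul_of_nonneg_right this (norm_nonneg _))
            (by positivity)
      _ = (‖M‖ * ‖v‖ ^ 2) * ‖S‖ ^ (2 ^ (k+1)) := by ring
  obtain ⟨n, hn⟩ : ∃ n : ℕ, ‖M‖ * ‖v‖ ^ 2 < 2 ^ n :=
    pow_unbounded_of_one_lt _ one_lt_two
  have hkey : b 0 ≤ 2 * ‖S‖ := by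
    have hN : (0:ℕ) < 2 ^ (n+1) := by positivity
    apply le_of_pow_le_pow_left₀ (n := 2 ^ (n+1)) (by positivity) (by positivity)
    calc b 0 ^ (2 ^ (n+1)) = (b 0 ^ (2 ^ n)) ^ 2 := by rw [← pow_mul]; ring_nf
      _ ≤ (b n) ^ 2 := pow_le_pow_left₀ (pow_nonneg (myPn_nonneg _) _) (hmain n) 2
      _ ≤ (‖M‖ * ‖v‖ ^ 2) * ‖S‖ ^ (2 ^ (n+1)) := hgrow n
      _ ≤ (2:ℝ) ^ (2 ^ (n+1)) * ‖S‖ ^ (2 ^ (n+1)) := by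
          apply mul_le_mul_of_nonneg_right _ (by positivity)
          calc ‖M‖ * ‖v‖ ^ 2 ≤ 2 ^ n := hn.le
            _ ≤ (2:ℝ) ^ (2 ^ (n+1)) := by
                apply pow_le_pow_right₀ one_le_two
                calc n ≤ 2 ^ n := (Nat.lt_two_pow_self (n := n)).le
                  _ ≤ 2 ^ (n+1) := Nat.pow_le_pow_right (by norm_num) (by omega)
      _ = (2 * ‖S‖) ^ (2 ^ (n+1)) := by rw [mul_pow]
  exact hb0.trans hkey

lemma myPolar (hherm : ∀ u v : E, ⟪M u, v⟫ = (starRingEnd ℂ) ⟪M v, u⟫)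
    (hpos : ∀ u : E, 0 ≤ (⟪M u, u⟫).re) {F : E →L[ℂ] E}
    (hF : ∀ x y : E, ⟪M (F x), y⟫ = ⟪M x, F y⟫) {c : ℝ} (hc : 0 ≤ c)
    (hQ : ∀ z : E, |(⟪M (F z), z⟫).re| ≤ c * myPn M z ^ 2) :
    ∀ x : E, myPn M x = 1 → myPn M (F x) ≤ c := by
  have hsym : ∀ a b : E, (⟪M (F a), b⟫).re = (⟪M (F b), a⟫).re := by
    intro a b
    rw [hherm (F a) b, ← hF b a]
    exact (Complex.conj_re _)
  have hre : ∀ x y : E, myPn M x = 1 → myPn M y = 1 → (⟪M (F x), y⟫).re ≤ c := by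
    intro x y hx hy
    have hplus : (⟪M (F (x + y)), x + y⟫).re
        = (⟪M (F x), x⟫).re + (⟪M (F y), y⟫).re + 2 * (⟪M (F x), y⟫).re := by
      have : ⟪M (F (x + y)), x + y⟫
          = ⟪M (F x), x⟫ + ⟪M (F x), y⟫ + ⟪M (F y), x⟫ + ⟪M (F y), y⟫ := by
        simp only [map_add, inner_add_left, inner_add_right]; ring
      rw [this]
      simp only [Complex.add_re]
      rw [hsym y x]; ring
    have hminus : (⟪M (F (x - y)), x - y⟫).re
        = (⟪M (F x), x⟫).re + (⟪M (F y), y⟫).re - 2 * (⟪M (F x), y⟫).re := by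
      have : ⟪M (F (x - y)), x - y⟫
          = ⟪M (F x), x⟫ - ⟪M (F x), y⟫ - ⟪M (F y), x⟫ + ⟪M (F y), y⟫ := by
        simp only [map_sub, inner_sub_left, inner_sub_right]; ring
      rw [this]
      simp only [Complex.add_re, Complex.sub_re]
      rw [hsym y x]; ring
    have h1 := hQ (x + y)
    have h2 := hQ (x - y)
    have hpar := myPar hherm hpos x y
    rw [hx, hy] at hpar
    norm_num at hpar
    have e1 : (⟪M (F (x+y)), x+y⟫).re ≤ c * myPn M (x+y) ^ 2 := (abs_le.mp h1).2
    have e2 : -(c * myPn M (x-y) ^ 2) ≤ (⟪M (F (x-y)), x-y⟫).re := (abs_le.mp h2).1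
    nlinarith [myPn_nonneg (M := M) (x+y), myPn_nonneg (M := M) (x-y)]
  intro x hx
  rcases eq_or_ne (myPn M (F x)) 0 with h0 | h0
  · rw [h0]; exact hc
  · obtain ⟨y, hy1, hy2⟩ := myDual hpos h0
    rw [hy2]
    exact hre x y hx hy1

lemma myMaster {T T' : E →L[ℂ] E}
    (hherm : ∀ u v : E, ⟪M u, v⟫ = (starRingEnd ℂ) ⟪M v, u⟫)
    (hpos : ∀ u : E, 0 ≤ (⟪M u, u⟫).re)
    (hT : ∀ u v : E, ⟪M (T' u), v⟫ = ⟪M u, T v⟫) {u : E} (hu : myPn M u = 1) :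
    myPn M (T' (T u) + T (T' u)) ≤
      4 * (sSup {r : ℝ | ∃ z : E, myPn M z = 1 ∧ r = ‖⟪M (T z), z⟫‖}) ^ 2 := by
  set W := {r : ℝ | ∃ z : E, myPn M z = 1 ∧ r = ‖⟪M (T z), z⟫‖} with hWdef
  set w := sSup W with hwdef
  have hT' : ∀ a b : E, ⟪M (T a), b⟫ = ⟪M a, T' b⟫ := by
    intro a b
    rw [hherm (T a) b, ← hT b a, ← hherm a (T' b)]
  have hbdd : BddAbove W := by
    refine ⟨Real.sqrt (2 * ‖T'.comp T‖), ?_⟩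
    rintro r ⟨z, hz, rfl⟩
    calc ‖⟪M (T z), z⟫‖ ≤ myPn M (T z) * myPn M z := myCS hherm hpos _ _
      _ = myPn M (T z) := by rw [hz, mul_one]
      _ ≤ Real.sqrt (2 * ‖T'.comp T‖) := by
          rw [← Real.sqrt_sq (myPn_nonneg (T z))]
          exact Real.sqrt_le_sqrt (myBound hherm hpos hT hz.le)
  have hw0 : 0 ≤ w := by
    apply Real.sSup_nonneg
    rintro r ⟨z, hz, rfl⟩
    exact norm_nonneg _
  have hQT : ∀ z : E, ‖⟪M (T z), z⟫‖ ≤ w * myPn M z ^ 2 := by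
    intro z
    rcases eq_or_ne (myPn M z) 0 with h0 | h0
    · have : ‖⟪M (T z), z⟫‖ ≤ myPn M (T z) * myPn M z := myCS hherm hpos _ _
      rw [h0, mul_zero] at this
      rw [h0]
      simpa using this
    · have hzpos : 0 < myPn M z := lt_of_le_of_ne (myPn_nonneg z) (Ne.symm h0)
      set y := (((myPn M z)⁻¹ : ℝ) : ℂ) • z with hydef
      have hy1 : myPn M y = 1 := by
        rw [hydef, myPn_smul, Complex.norm_real, Real.norm_eq_abs, abs_of_pos (by positivity),
          inv_mul_cancel₀ h0]
      have hmem : ‖⟪M (T y), y⟫‖ ≤ w := by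
        apply le_csSup hbdd
        exact ⟨y, hy1, rfl⟩
      have hcalc : ⟪M (T y), y⟫ = ((((myPn M z)⁻¹ : ℝ) : ℂ))^2 * ⟪M (T z), z⟫ := by
        rw [hydef, map_smul, map_smul, inner_smul_left, inner_smul_right,
          Complex.conj_ofReal]
        ring
      rw [hcalc] at hmem
      rw [norm_mul, norm_pow, Complex.norm_real, Real.norm_eq_abs, abs_of_pos (by positivity)] at hmem
      have := mul_le_mul_of_nonneg_right hmem (by positivity : (0:ℝ) ≤ myPn M z ^ 2)
      calc ‖⟪M (T z), z⟫‖
          = ((myPn M z)⁻¹ ^ 2 * ‖⟪M (T z), z⟫‖) * myPn M z ^ 2 := by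
            field_simp
        _ ≤ w * myPn M z ^ 2 := this
  -- the two real/imaginary parts
  set F : E →L[ℂ] E := T + T' with hFdef
  set F' : E →L[ℂ] E := Complex.I • (T - T') with hF'def
  have hFapp : ∀ z : E, F z = T z + T' z := fun z => rfl
  have hF'app : ∀ z : E, F' z = Complex.I • (T z - T' z) := fun z => rfl
  have hFsa : ∀ x y : E, ⟪M (F x), y⟫ = ⟪M x, F y⟫ := by
    intro x y
    rw [hFapp, hFapp, map_add, inner_add_left, inner_add_right, hT' x y, hT x y]
    ring
  have hF'sa : ∀ x y : E, ⟪M (F' x), y⟫ = ⟪M x, F' y⟫ := by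
    intro x y
    rw [hF'app, hF'app, map_smul, inner_smul_left, inner_smul_right, map_sub,
      inner_sub_left, inner_sub_right, hT' x y, hT x y]
    simp [Complex.conj_I]
    try ring
  have hQF : ∀ z : E, |(⟪M (F z), z⟫).re| ≤ (2 * w) * myPn M z ^ 2 := by
    intro z
    have hconj : ⟪M (T' z), z⟫ = (starRingEnd ℂ) ⟪M (T z), z⟫ := by
      rw [hT z z]
      exact hherm z (T z)
    have : ⟪M (F z), z⟫ = ⟪M (T z), z⟫ + (starRingEnd ℂ) ⟪M (T z), z⟫ := by
      rw [hFapp, map_add, inner_add_left, hconj]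
    rw [this]
    simp only [Complex.add_re, Complex.conj_re]
    rw [show (⟪M (T z), z⟫).re + (⟪M (T z), z⟫).re = 2 * (⟪M (T z), z⟫).re by ring]
    rw [abs_mul, (by norm_num : |(2:ℝ)| = 2)]
    have : |(⟪M (T z), z⟫).re| ≤ w * myPn M z ^ 2 :=
      (Complex.abs_re_le_norm _).trans (hQT z)
    linarith
  have hQF' : ∀ z : E, |(⟪M (F' z), z⟫).re| ≤ (2 * w) * myPn M z ^ 2 := by
    intro z
    have hconj : ⟪M (T' z), z⟫ = (starRingEnd ℂ) ⟪M (T z), z⟫ := by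
      rw [hT z z]
      exact hherm z (T z)
    have hval : ⟪M (F' z), z⟫
        = Complex.I * (⟪M (T z), z⟫ - (starRingEnd ℂ) ⟪M (T z), z⟫) * (-1) := by
      rw [hF'app, map_smul, inner_smul_left, map_sub, inner_sub_left, hconj]
      simp [Complex.conj_I]
      try ring
    rw [hval]
    have : (Complex.I * (⟪M (T z), z⟫ - (starRingEnd ℂ) ⟪M (T z), z⟫) * (-1)).re
        = 2 * (⟪M (T z), z⟫).im := by
      set q := ⟪M (T z), z⟫
      simp [Complex.ext_iff, Complex.mul_re, Complex.mul_im, Complex.sub_re,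
        Complex.sub_im, Complex.conj_re, Complex.conj_im]
      try ring
    rw [this, abs_mul, (by norm_num : |(2:ℝ)| = 2)]
    have : |(⟪M (T z), z⟫).im| ≤ w * myPn M z ^ 2 :=
      (Complex.abs_im_le_norm _).trans (hQT z)
    linarith
  have hF1 : ∀ x : E, myPn M x = 1 → myPn M (F x) ≤ 2 * w :=
    myPolar hherm hpos hFsa (by positivity) hQF
  have hF'1 : ∀ x : E, myPn M x = 1 → myPn M (F' x) ≤ 2 * w :=
    myPolar hherm hpos hF'sa (by positivity) hQF'
  have hTT' : ∀ x : E, myPn M x = 1 → myPn M (T x) ^ 2 + myPn M (T' x) ^ 2 ≤ 4 * w ^ 2 := by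
    intro x hx
    have h1 : myPn M (F x) = myPn M (T x + T' x) := by rw [hFapp]
    have h2 : myPn M (F' x) = myPn M (T x - T' x) := by
      rw [hF'app, myPn_smul, Complex.norm_I, one_mul]
    have hpar := myPar hherm hpos (T x) (T' x)
    have e1 := hF1 x hx
    have e2 := hF'1 x hx
    rw [h1] at e1
    rw [h2] at e2
    nlinarith [myPn_nonneg (M := M) (T x + T' x), myPn_nonneg (M := M) (T x - T' x), hw0]
  -- final step
  set z₀ := T' (T u) + T (T' u) with hz₀
  rcases eq_or_ne (myPn M z₀) 0 with h0 | h0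
  · rw [h0]; positivity
  · obtain ⟨y, hy1, hy2⟩ := myDual hpos h0
    rw [hy2]
    have hsplit : ⟪M z₀, y⟫ = ⟪M (T u), T y⟫ + ⟪M (T' u), T' y⟫ := by
      rw [hz₀, map_add, inner_add_left]
      congr 1
      · rw [hT (T u) y]      -- ⟪M (T'(Tu)), y⟫ = ⟪M (Tu), T y⟫
      · rw [hT' (T' u) y]
    rw [hsplit]
    rw [Complex.add_re]
    have c1 : (⟪M (T u), T y⟫).re ≤ myPn M (T u) * myPn M (T y) := myRe_le hherm hpos _ _
    have c2 : (⟪M (T' u), T' y⟫).re ≤ myPn M (T' u) * myPn M (T' y) := myRe_le hherm hpos _ _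
    have hu2 := hTT' u hu
    have hy2' := hTT' y hy1
    nlinarith [myPn_nonneg (M := M) (T u), myPn_nonneg (M := M) (T' u),
      myPn_nonneg (M := M) (T y), myPn_nonneg (M := M) (T' y),
      sq_nonneg (myPn M (T u) - myPn M (T y)), sq_nonneg (myPn M (T' u) - myPn M (T' y))]

end Abstract

theorem stmt8 (A X Y X' Y' : H →L[ℂ] H) (hA : A.IsPositive)
    (hX : IsAAdjoint A X X') (hY : IsAAdjoint A Y Y') :
    (1/4) * max (opNormA A (X * X' + Y' * Y)) (opNormA A (X' * X + Y * Y')) ≤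
      (wB A (blk 0 X Y 0))^2 := by
  classical
  set T : H × H →L[ℂ] H × H := blk 0 X Y 0 with hTdef
  set Tc : H × H →L[ℂ] H × H := blk 0 Y' X' 0 with hTcdef
  let e' : WithLp 2 (H × H) ≃L[ℂ] H × H := WithLp.prodContinuousLinearEquiv 2 ℂ H H
  let Lm : (H × H →L[ℂ] H × H) → (WithLp 2 (H × H) →L[ℂ] WithLp 2 (H × H)) := fun S =>
    (e'.symm.toContinuousLinearMap).comp (S.comp e'.toContinuousLinearMap)
  let M : WithLp 2 (H × H) →L[ℂ] WithLp 2 (H × H) := Lm (Bop A)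
  let T₂ : WithLp 2 (H × H) →L[ℂ] WithLp 2 (H × H) := Lm T
  let T₂' : WithLp 2 (H × H) →L[ℂ] WithLp 2 (H × H) := Lm Tc
  have hAsa : ∀ x y : H, (inner ℂ (A x) y : ℂ) = inner ℂ x (A y) := by
    intro x y
    nth_rewrite 1 [← hA.isSelfAdjoint.adjoint_eq]
    exact ContinuousLinearMap.adjoint_inner_left A y x
  have hM : ∀ u v : WithLp 2 (H × H),
      (inner ℂ (M u) v : ℂ) = inner ℂ (A u.fst) v.fst + inner ℂ (A u.snd) v.snd := fun u v => rfl
  have hherm₂ : ∀ u v : WithLp 2 (H × H),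
      (inner ℂ (M u) v : ℂ) = (starRingEnd ℂ) (inner ℂ (M v) u) := by
    intro u v
    rw [hM, hM, map_add, inner_conj_symm, inner_conj_symm, hAsa u.fst v.fst,
      hAsa u.snd v.snd]
  have hpos₂ : ∀ u : WithLp 2 (H × H), (0:ℝ) ≤ (inner ℂ (M u) u : ℂ).re := by
    intro u
    rw [hM]
    have h1 := hA.2 u.fst
    have h2 := hA.2 u.snd
    simp only [ContinuousLinearMap.reApplyInnerSelf, RCLike.re_to_complex] at h1 h2
    rw [Complex.add_re]
    exact add_nonneg h1 h2
  have hXp : ∀ a b : H, (inner ℂ (A (X' a)) b : ℂ) = inner ℂ (A a) (X b) := by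
    intro a b
    have h0 : A (X' a) = (ContinuousLinearMap.adjoint X) (A a) :=
      congrFun (congrArg DFunLike.coe hX) a
    rw [h0]
    exact ContinuousLinearMap.adjoint_inner_left X b (A a)
  have hYp : ∀ a b : H, (inner ℂ (A (Y' a)) b : ℂ) = inner ℂ (A a) (Y b) := by
    intro a b
    have h0 : A (Y' a) = (ContinuousLinearMap.adjoint Y) (A a) :=
      congrFun (congrArg DFunLike.coe hY) a
    rw [h0]
    exact ContinuousLinearMap.adjoint_inner_left Y b (A a)
  have hTfst : ∀ z : WithLp 2 (H × H), (T₂ z).fst = X z.snd := by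
    intro z
    show (0 : H →L[ℂ] H) z.fst + X z.snd = X z.snd
    simp
  have hTsnd : ∀ z : WithLp 2 (H × H), (T₂ z).snd = Y z.fst := by
    intro z
    show Y z.fst + (0 : H →L[ℂ] H) z.snd = Y z.fst
    simp
  have hT'fst : ∀ z : WithLp 2 (H × H), (T₂' z).fst = Y' z.snd := by
    intro z
    show (0 : H →L[ℂ] H) z.fst + Y' z.snd = Y' z.snd
    simp
  have hT'snd : ∀ z : WithLp 2 (H × H), (T₂' z).snd = X' z.fst := by
    intro z
    show X' z.fst + (0 : H →L[ℂ] H) z.snd = X' z.fst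
    simp
  have hT₂ : ∀ u v : WithLp 2 (H × H),
      (inner ℂ (M (T₂' u)) v : ℂ) = inner ℂ (M u) (T₂ v) := by
    intro u v
    rw [hM, hM, hT'fst u, hT'snd u, hTfst v, hTsnd v, hXp u.fst v.snd, hYp u.snd v.fst]
    ring
  have hpn_eq : ∀ z : WithLp 2 (H × H), myPn M z = vnormB A (z.fst, z.snd) := fun z => rfl
  have habs_eq : ∀ z : WithLp 2 (H × H),
      (inner ℂ (M (T₂ z)) z : ℂ) = inn2 (Bop A (T (z.fst, z.snd))) (z.fst, z.snd) := fun z => rfl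
  have hsets : {r : ℝ | ∃ z : WithLp 2 (H × H), myPn M z = 1 ∧
        r = ‖(inner ℂ (M (T₂ z)) z : ℂ)‖}
      = {r : ℝ | ∃ a : H × H, vnormB A a = 1 ∧ r = ‖inn2 (Bop A (T a)) a‖} := by
    ext r
    constructor
    · rintro ⟨z, hz, rfl⟩
      refine ⟨(z.fst, z.snd), ?_, ?_⟩
      · rw [← hpn_eq z]; exact hz
      · rw [habs_eq z]
    · rintro ⟨a, ha, rfl⟩
      refine ⟨e'.symm a, ?_, ?_⟩
      · rw [hpn_eq (e'.symm a)]
        convert ha <;> rfl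
      · rw [habs_eq (e'.symm a)]
        congr
  have hwB_eq : wB A T = sSup {r : ℝ | ∃ z : WithLp 2 (H × H), myPn M z = 1 ∧
      r = ‖(inner ℂ (M (T₂ z)) z : ℂ)‖} := by
    rw [hsets]; rfl
  have hw0 : (0:ℝ) ≤ wB A T := by
    apply Real.sSup_nonneg
    rintro r ⟨a, ha, rfl⟩
    exact norm_nonneg _
  have hvB1 : ∀ z : H, vnormB A (z, (0:H)) = vnormA A z := by
    intro z
    have h0 : inn2 (Bop A (z, (0:H))) (z, (0:H)) = innA A z z := by
      show (inner ℂ (A z) z : ℂ) + inner ℂ (A (0:H)) (0:H) = inner ℂ (A z) z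
      simp
    unfold vnormB vnormA
    rw [h0]
  have hvB2 : ∀ z : H, vnormB A ((0:H), z) = vnormA A z := by
    intro z
    have h0 : inn2 (Bop A ((0:H), z)) ((0:H), z) = innA A z z := by
      show (inner ℂ (A (0:H)) (0:H) : ℂ) + inner ℂ (A z) z = inner ℂ (A z) z
      simp
    unfold vnormB vnormA
    rw [h0]
  -- first component
  have key₁ : ∀ x : H, vnormA A x = 1 →
      vnormA A ((X * X' + Y' * Y) x) ≤ 4 * (wB A T)^2 := by
    intro x hx
    set u : WithLp 2 (H × H) := e'.symm (x, 0) with hu_def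
    have hufst : u.fst = x := rfl
    have husnd : u.snd = (0:H) := rfl
    have hu : myPn M u = 1 := by
      rw [hpn_eq u, hufst, husnd, hvB1, hx]
    have hmas := myMaster (M := M) hherm₂ hpos₂ hT₂ hu
    rw [← hwB_eq] at hmas
    have hzfst : (T₂' (T₂ u) + T₂ (T₂' u)).fst = (X * X' + Y' * Y) x := by
      have : (T₂' (T₂ u) + T₂ (T₂' u)).fst = (T₂' (T₂ u)).fst + (T₂ (T₂' u)).fst := rfl
      rw [this, hT'fst, hTfst, hTsnd, hT'snd, hufst]
      simp only [add_apply, ContinuousLinearMap.mul_apply]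
      try abel
    have hzsnd : (T₂' (T₂ u) + T₂ (T₂' u)).snd = (0:H) := by
      have : (T₂' (T₂ u) + T₂ (T₂' u)).snd = (T₂' (T₂ u)).snd + (T₂ (T₂' u)).snd := rfl
      rw [this, hT'snd, hTsnd, hTfst, hT'fst, husnd]
      simp
    have hfinal : myPn M (T₂' (T₂ u) + T₂ (T₂' u)) = vnormA A ((X * X' + Y' * Y) x) := by
      rw [hpn_eq, hzfst, hzsnd, hvB1]
    rw [hfinal] at hmas
    nlinarith [hmas, hw0, Real.sqrt_nonneg ((innA A ((X * X' + Y' * Y) x) ((X * X' + Y' * Y) x)).re)]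
  have key₂ : ∀ x : H, vnormA A x = 1 →
      vnormA A ((X' * X + Y * Y') x) ≤ 4 * (wB A T)^2 := by
    intro x hx
    set u : WithLp 2 (H × H) := e'.symm (0, x) with hu_def
    have hufst : u.fst = (0:H) := rfl
    have husnd : u.snd = x := rfl
    have hu : myPn M u = 1 := by
      rw [hpn_eq u, hufst, husnd, hvB2, hx]
    have hmas := myMaster (M := M) hherm₂ hpos₂ hT₂ hu
    rw [← hwB_eq] at hmas
    have hzsnd : (T₂' (T₂ u) + T₂ (T₂' u)).snd = (X' * X + Y * Y') x := by
      have : (T₂' (T₂ u) + T₂ (T₂' u)).snd = (T₂' (T₂ u)).snd + (T₂ (T₂' u)).snd := rfl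
      rw [this, hT'snd, hTsnd, hTfst, hT'fst, husnd]
      simp only [add_apply, ContinuousLinearMap.mul_apply]
      try abel
    have hzfst : (T₂' (T₂ u) + T₂ (T₂' u)).fst = (0:H) := by
      have : (T₂' (T₂ u) + T₂ (T₂' u)).fst = (T₂' (T₂ u)).fst + (T₂ (T₂' u)).fst := rfl
      rw [this, hT'fst, hTfst, hTsnd, hT'snd, hufst]
      simp
    have hfinal : myPn M (T₂' (T₂ u) + T₂ (T₂' u)) = vnormA A ((X' * X + Y * Y') x) := by
      rw [hpn_eq, hzfst, hzsnd, hvB2]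
    rw [hfinal] at hmas
    nlinarith [hmas, hw0, Real.sqrt_nonneg ((innA A ((X' * X + Y * Y') x) ((X' * X + Y * Y') x)).re)]
  have h₁ : opNormA A (X * X' + Y' * Y) ≤ 4 * (wB A T)^2 := by
    apply Real.sSup_le
    · rintro r ⟨x, hxcl, hx1, rfl⟩
      exact key₁ x hx1
    · positivity
  have h₂ : opNormA A (X' * X + Y * Y') ≤ 4 * (wB A T)^2 := by
    apply Real.sSup_le
    · rintro r ⟨x, hxcl, hx1, rfl⟩
      exact key₂ x hx1
    · positivity
  have := max_le h₁ h₂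
  linarith
end
end
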